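/- arXiv:2401.09764 — 2 statements merged into one kernel-verified Lean document; each statement's English description precedes it below -/
import Mathlib

section
/- If T is the weighted block tree of a graph G on n vertices and T has exactly three centroids, then the unique central centroid of T is a block vertex B of weight 0, and the block B is an edge (K2) of G. -/
open SimpleGraph
open scoped Classical

/-- v is a cut vertex: its removal disconnects two vertices that were connected. -/
def IsCutVertex {V : Type*} (G : SimpleGraph V) (v : V) : Prop :=
  ∃ a b : ({u : V | u ≠ v} : Set V),
    G.Reachable a.1 b.1 ∧ ¬ (G.induce {u : V | u ≠ v}).Reachable a b

/-- B is a nonempty biconnected set: the induced subgraph is connected and remains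
connected (in the sense of pairwise reachability) after removing any one vertex. -/
def IsBiconn {V : Type*} (G : SimpleGraph V) (B : Set V) : Prop :=
  B.Nonempty ∧ (∀ x y : B, (G.induce B).Reachable x y) ∧
  ∀ b ∈ B, ∀ x y : ↥(B \ {b}), (G.induce (B \ {b})).Reachable x y

/-- A block is a maximal biconnected set of vertices. -/
def IsBlock {V : Type*} (G : SimpleGraph V) (B : Set V) : Prop :=
  IsBiconn G B ∧ ∀ B', B ⊆ B' → IsBiconn G B' → B = B'

/-- Vertex set of the block tree of G: cut vertices and blocks. -/
def BTVert {V : Type*} (G : SimpleGraph V) : Type _ :=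
  {v : V // IsCutVertex G v} ⊕ {B : Set V // IsBlock G B}

/-- The block tree of G: a cut vertex v is adjacent to a block B iff v ∈ B. -/
def blockTree {V : Type*} (G : SimpleGraph V) : SimpleGraph (BTVert G) where
  Adj x y :=
    (∃ v B, x = Sum.inl v ∧ y = Sum.inr B ∧ v.1 ∈ B.1) ∨
    (∃ v B, x = Sum.inr B ∧ y = Sum.inl v ∧ v.1 ∈ B.1)
  symm := by
    constructor
    rintro x y (⟨v, B, rfl, rfl, h⟩ | ⟨v, B, rfl, rfl, h⟩)
    · exact Or.inr ⟨v, B, rfl, rfl, h⟩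
    · exact Or.inl ⟨v, B, rfl, rfl, h⟩
  loopless := by
    constructor
    rintro x (⟨v, B, rfl, h, -⟩ | ⟨v, B, rfl, h, -⟩) <;> simp at h

/-- The weight function of the weighted block tree: cut vertices weigh 1 and a block
weighs its number of non-cut vertices. -/
noncomputable def btWeight {V : Type*} (G : SimpleGraph V) : BTVert G → ℕ :=
  Sum.elim (fun _ => 1) (fun B => (B.1 \ {v | IsCutVertex G v}).ncard)

/-- A leaf is a vertex with exactly one neighbor. -/
def IsLeaf {V : Type*} (T : SimpleGraph V) (v : V) : Prop :=
  (T.neighborSet v).ncard = 1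
/-- Weight of the connected component of u in T - v. -/
noncomputable def compWeight {V : Type*} [Fintype V] (T : SimpleGraph V) (w : V → ℕ)
    (v u : V) : ℕ :=
  ∑ y : V, if ∃ p : T.Walk u y, v ∉ p.support then w y else 0

/-- Heaviest subtree weight. -/
noncomputable def hs {V : Type*} [Fintype V] (T : SimpleGraph V) (w : V → ℕ) (v : V) : ℕ :=
  Finset.univ.sup fun u => compWeight T w v u

/-- A centroid minimizes the heaviest subtree weight. -/
def IsCentroid {V : Type*} [Fintype V] (T : SimpleGraph V) (w : V → ℕ) (v : V) : Prop :=
  ∀ u, hs T w v ≤ hs T w u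

/-- Eccentricity of c within the set of centroids. -/
noncomputable def centroidEcc {V : Type*} [Fintype V] (T : SimpleGraph V) (w : V → ℕ)
    (c : V) : ℕ :=
  Finset.univ.sup fun x => if IsCentroid T w x then T.dist c x else 0

/-- A central centroid is a center of the path of centroids. -/
def IsCentralCentroid {V : Type*} [Fintype V] (T : SimpleGraph V) (w : V → ℕ) (c : V) : Prop :=
  IsCentroid T w c ∧ ∀ c', IsCentroid T w c' → centroidEcc T w c ≤ centroidEcc T w c'
section Helpers
variable {V : Type*} {G : SimpleGraph V}

/-- Reachability within a set `C` (all vertices of the walk in `C`). -/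
def InR (G : SimpleGraph V) (C : Set V) (x y : V) : Prop :=
  ∃ p : G.Walk x y, ∀ z ∈ p.support, z ∈ C

namespace InR

lemma refl {C : Set V} {x : V} (hx : x ∈ C) : InR G C x x :=
  ⟨SimpleGraph.Walk.nil, by simp [hx]⟩

lemma symm {C : Set V} {x y : V} (h : InR G C x y) : InR G C y x := by
  obtain ⟨p, hp⟩ := h
  exact ⟨p.reverse, by simpa using hp⟩

lemma trans {C : Set V} {x y z : V} (h : InR G C x y) (h' : InR G C y z) :
    InR G C x z := by
  obtain ⟨p, hp⟩ := h; obtain ⟨q, hq⟩ := h'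
  refine ⟨p.append q, ?_⟩
  intro u hu
  rw [SimpleGraph.Walk.mem_support_append_iff] at hu
  exact hu.elim (hp u) (hq u)

lemma mono {C D : Set V} {x y : V} (hCD : C ⊆ D) (h : InR G C x y) : InR G D x y := by
  obtain ⟨p, hp⟩ := h; exact ⟨p, fun z hz => hCD (hp z hz)⟩

lemma of_adj {C : Set V} {x y : V} (h : G.Adj x y) (hx : x ∈ C) (hy : y ∈ C) :
    InR G C x y :=
  ⟨h.toWalk, by simp [hx, hy]⟩

lemma mem_left {C : Set V} {x y : V} (h : InR G C x y) : x ∈ C := by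
  obtain ⟨p, hp⟩ := h; exact hp x p.start_mem_support

lemma mem_right {C : Set V} {x y : V} (h : InR G C x y) : y ∈ C := by
  obtain ⟨p, hp⟩ := h; exact hp y p.end_mem_support

end InR

lemma reach_induce_of_InR {C : Set V} {x y : V} (h : InR G C x y)
    (hx : x ∈ C) (hy : y ∈ C) : (G.induce C).Reachable ⟨x, hx⟩ ⟨y, hy⟩ := by
  obtain ⟨p, hp⟩ := h
  induction p with
  | nil => rfl
  | @cons a b c hab q ih =>
    have hb : b ∈ C := hp b (by simp)
    have h1 : (G.induce C).Adj ⟨a, hx⟩ ⟨b, hb⟩ := by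
      simp [SimpleGraph.comap_adj, hab]
    exact (h1.reachable).trans (ih hb hy (fun z hz => hp z (by
      rw [SimpleGraph.Walk.support_cons]; exact List.mem_cons_of_mem _ hz)))

lemma InR_of_reach_induce {C : Set V} {a b : ↥C} (h : (G.induce C).Reachable a b) :
    InR G C a.1 b.1 := by
  obtain ⟨p⟩ := h
  induction p with
  | nil => exact InR.refl (Subtype.coe_prop _)
  | @cons u v w huv q ih =>
    have : G.Adj u.1 v.1 := huv
    exact (InR.of_adj this u.2 v.2).trans ih

end Helpers
section Biconn
variable {V : Type*} {G : SimpleGraph V}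

lemma IsBiconn.conn {B : Set V} (h : IsBiconn G B) {x y : V} (hx : x ∈ B) (hy : y ∈ B) :
    InR G B x y :=
  InR_of_reach_induce (h.2.1 ⟨x, hx⟩ ⟨y, hy⟩)

lemma IsBiconn.del {B : Set V} (h : IsBiconn G B) (b : V) {x y : V}
    (hx : x ∈ B \ {b}) (hy : y ∈ B \ {b}) : InR G (B \ {b}) x y := by
  by_cases hb : b ∈ B
  · exact InR_of_reach_induce (h.2.2 b hb ⟨x, hx⟩ ⟨y, hy⟩)
  · have : B \ {b} = B := Set.diff_singleton_eq_self hb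
    rw [this] at hx hy ⊢
    exact h.conn hx hy

lemma IsBiconn.delSub {B D : Set V} (h : IsBiconn G B) (hD : D.Subsingleton) {x y : V}
    (hx : x ∈ B \ D) (hy : y ∈ B \ D) : InR G (B \ D) x y := by
  rcases hD.eq_empty_or_singleton with rfl | ⟨b, rfl⟩
  · rw [Set.diff_empty] at hx hy ⊢; exact h.conn hx hy
  · exact h.del b hx hy

lemma biconn_singleton (v : V) : IsBiconn G {v} := by
  refine ⟨⟨v, rfl⟩, fun x y => ?_, fun b _ x y => ?_⟩
  · have : x = y := Subtype.ext (by
      have hx := x.2; have hy := y.2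
      simp only [Set.mem_singleton_iff] at hx hy; rw [hx, hy])
    rw [this]
  · have : x = y := Subtype.ext (by
      have hx := x.2; have hy := y.2
      simp only [Set.mem_diff, Set.mem_singleton_iff] at hx hy
      rw [hx.1, hy.1])
    rw [this]

lemma biconn_pair {u v : V} (h : G.Adj u v) : IsBiconn G {u, v} := by
  have hco : ∀ x y : ↥({u, v} : Set V), (G.induce {u, v}).Reachable x y := by
    rintro ⟨x, hx⟩ ⟨y, hy⟩
    simp only [Set.mem_insert_iff, Set.mem_singleton_iff] at hx hy
    have hR : ∀ (a b : V) (ha : a ∈ ({u, v} : Set V)) (hb : b ∈ ({u, v} : Set V)),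
        a = u → b = v → (G.induce {u, v}).Reachable ⟨a, ha⟩ ⟨b, hb⟩ := by
      rintro a b ha hb rfl rfl
      exact SimpleGraph.Adj.reachable (by simp [SimpleGraph.comap_adj, h])
    rcases hx with rfl | rfl <;> rcases hy with rfl | rfl
    · rfl
    · exact hR _ _ _ _ rfl rfl
    · exact (hR _ _ _ _ rfl rfl).symm
    · rfl
  refine ⟨⟨u, by simp⟩, hco, fun b hb x y => ?_⟩
  have hsub : ({u, v} : Set V) \ {b} ⊆ {u, v} \ {b} := le_refl _
  have : x = y ∨ (G.induce ({u, v} \ {b})).Reachable x y := by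
    have hx := x.2; have hy := y.2
    simp only [Set.mem_diff, Set.mem_insert_iff, Set.mem_singleton_iff] at hx hy
    rcases hx.1 with h1 | h1 <;> rcases hy.1 with h2 | h2
    · exact Or.inl (Subtype.ext (h1.trans h2.symm))
    · -- x = u, y = v, both ≠ b : edge still there
      refine Or.inr (SimpleGraph.Adj.reachable ?_)
      have : G.Adj x.1 y.1 := by rw [h1, h2]; exact h
      simpa [SimpleGraph.comap_adj] using this
    · refine Or.inr (SimpleGraph.Adj.reachable ?_).symm
      have : G.Adj y.1 x.1 := by rw [h1, h2]; exact h
      simpa [SimpleGraph.comap_adj] using this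
    · exact Or.inl (Subtype.ext (h1.trans h2.symm))
  rcases this with rfl | h' 
  · rfl
  · exact h'

/-- Every biconnected set extends to a block. -/
lemma exists_block_superset [Fintype V] {B0 : Set V} (h0 : IsBiconn G B0) :
    ∃ B, IsBlock G B ∧ B0 ⊆ B := by
  classical
  have hfin : {B : Set V | IsBiconn G B ∧ B0 ⊆ B}.Finite := Set.toFinite _
  have hne : {B : Set V | IsBiconn G B ∧ B0 ⊆ B}.Nonempty := ⟨B0, h0, le_refl _⟩
  obtain ⟨B, hB, hmax⟩ := Set.Finite.exists_maximalFor (fun B => B.ncard)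
    _ hfin hne
  refine ⟨B, ⟨hB.1, fun B' hBB' hB' => ?_⟩, hB.2⟩
  have hB'mem : B' ∈ {B : Set V | IsBiconn G B ∧ B0 ⊆ B} := ⟨hB', hB.2.trans hBB'⟩
  have hle : B.ncard ≤ B'.ncard := Set.ncard_le_ncard hBB' (Set.toFinite _)
  have := hmax hB'mem hle
  exact Set.eq_of_subset_of_ncard_le hBB' this.ge (Set.toFinite _)

lemma IsBlock.eq_of_subset {B B' : Set V} (hB : IsBlock G B) (hB' : IsBiconn G B')
    (h : B ⊆ B') : B = B' := hB.2 B' h hB'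

lemma IsBlock.diff_nonempty {B B' : Set V} (hB : IsBlock G B) (hB' : IsBlock G B')
    (hne : B ≠ B') {u : V} (hu : u ∈ B) (hu' : u ∈ B') : (B \ {u}).Nonempty := by
  rcases Set.eq_empty_or_nonempty (B \ {u}) with he | hne'
  · exfalso
    have hBu : B = {u} := by
      apply Set.eq_of_subset_of_subset
      · intro z hz
        by_contra hzu
        exact (Set.eq_empty_iff_forall_notMem.mp he z) ⟨hz, hzu⟩
      · intro z hz; rw [Set.mem_singleton_iff] at hz; rw [hz]; exact hu
    have : B ⊆ B' := by rw [hBu]; intro z hz; rw [Set.mem_singleton_iff] at hz; rw [hz]; exact hu'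
    exact hne (hB.eq_of_subset hB'.1 this)
  · exact hne'

end Biconn
section Cut
variable {V : Type*} {G : SimpleGraph V}
open SimpleGraph.Walk

lemma path_avoid_split {a c : V} {p : G.Walk a c} (hp : p.IsPath) {z b : V}
    (hz : z ∈ p.support) (hbz : b ≠ z) :
    b ∉ (p.takeUntil z hz).support ∨ b ∉ (p.dropUntil z hz).support := by
  by_contra hcon
  push_neg at hcon
  obtain ⟨h1, h2⟩ := hcon
  have hnd := hp.support_nodup
  rw [← take_spec p hz, support_append] at hnd
  have hdis := List.disjoint_of_nodup_append hnd
  have h2' : b ∈ (p.dropUntil z hz).support.tail := by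
    have hc := support_eq_cons (p.dropUntil z hz)
    rw [hc, List.mem_cons] at h2
    exact h2.resolve_left hbz
  exact hdis h1 h2'

lemma cut_of_two_blocks [Fintype V] (hG : G.Connected) {B B' : Set V}
    (hB : IsBlock G B) (hB' : IsBlock G B') (hne : B ≠ B') {u : V}
    (hu : u ∈ B) (hu' : u ∈ B') : IsCutVertex G u := by
  by_contra hcut
  have hforall : ∀ a b : ({w : V | w ≠ u} : Set V),
      G.Reachable a.1 b.1 → (G.induce {w : V | w ≠ u}).Reachable a b := by
    intro a b hr
    by_contra hnr
    exact hcut ⟨a, b, hr, hnr⟩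
  obtain ⟨x, hx⟩ := hB.diff_nonempty hB' hne hu hu'
  obtain ⟨y, hy⟩ := hB'.diff_nonempty hB hne.symm hu' hu
  have hxu : x ≠ u := hx.2
  have hyu : y ≠ u := hy.2
  have hxy : G.Reachable x y := hG.preconnected x y
  have hI := hforall ⟨x, hxu⟩ ⟨y, hyu⟩ hxy
  obtain ⟨p0, hp0⟩ := InR_of_reach_induce hI
  -- make it a path
  set q : G.Walk x y := (p0.toPath : G.Walk x y) with hqdef
  have hqpath : q.IsPath := p0.toPath.2
  have hq_ne_u : ∀ z ∈ q.support, z ≠ u := fun z hzq =>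
    hp0 z (support_toPath_subset p0 hzq)
  set S : Set V := B ∪ B' ∪ {z | z ∈ q.support} with hSdef
  have hBS : B ⊆ S := fun z hz => Or.inl (Or.inl hz)
  have hB'S : B' ⊆ S := fun z hz => Or.inl (Or.inr hz)
  have hqS : ∀ z ∈ q.support, z ∈ S := fun z hz => Or.inr hz
  have hxS : x ∈ S := hBS hx.1
  have hyS : y ∈ S := hB'S hy.1
  have huS : u ∈ S := hBS hu
  -- connectivity anchored at x
  have hconn : ∀ z ∈ S, InR G S z x := by
    intro z hz
    rcases hz with (hz | hz) | hz
    · exact (hB.1.conn hz hx.1).mono hBS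
    · exact ((hB'.1.conn hz hu').mono hB'S).trans
        (((hB.1.conn hu hx.1).mono hBS))
    · refine (InR.symm ⟨q.takeUntil z hz, fun w hw => hqS w (support_takeUntil_subset _ _ hw)⟩)
  -- deleted connectivity, all anchored at u or appropriate
  have hdel : ∀ b ∈ S, ∀ z ∈ S \ {b}, ∀ z' ∈ S \ {b}, InR G (S \ {b}) z z' := by
    intro b hbS z hz z' hz'
    by_cases hbu : b = u
    · subst hbu
      -- connect everything to x
      have key : ∀ w ∈ S \ {b}, InR G (S \ {b}) w x := by
        intro w hw
        rcases hw.1 with (hwB | hwB') | hwq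
        · exact (hB.1.del b ⟨hwB, hw.2⟩ ⟨hx.1, hxu⟩).mono
            (fun t ht => ⟨hBS ht.1, ht.2⟩)
        · -- w ∈ B' : go to y inside B' \ {u}, then along q to x
          have h1 : InR G (S \ {b}) w y := (hB'.1.del b ⟨hwB', hw.2⟩ ⟨hy.1, hyu⟩).mono
            (fun t ht => ⟨hB'S ht.1, ht.2⟩)
          have h2 : InR G (S \ {b}) y x :=
            ⟨q.reverse, fun t ht => by
              rw [support_reverse, List.mem_reverse] at ht
              exact ⟨hqS t ht, hq_ne_u t ht⟩⟩
          exact h1.trans h2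
        · exact InR.symm ⟨q.takeUntil w hwq, fun t ht => by
            have := support_takeUntil_subset q hwq ht
            exact ⟨hqS t this, hq_ne_u t this⟩⟩
      exact (key z hz).trans (key z' hz').symm
    · -- b ≠ u : connect everything to u
      have huD : u ∈ S \ {b} := ⟨huS, fun h => hbu ((Set.mem_singleton_iff.mp h).symm)⟩
      have hBpart : ∀ w, w ∈ B → w ≠ b → InR G (S \ {b}) w u := by
        intro w hwB hwb
        exact (hB.1.del b ⟨hwB, hwb⟩ ⟨hu, Ne.symm hbu⟩).mono (fun t ht => ⟨hBS ht.1, ht.2⟩)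
      have hB'part : ∀ w, w ∈ B' → w ≠ b → InR G (S \ {b}) w u := by
        intro w hwB hwb
        exact (hB'.1.del b ⟨hwB, hwb⟩ ⟨hu', Ne.symm hbu⟩).mono (fun t ht => ⟨hB'S ht.1, ht.2⟩)
      have hqpart : ∀ w (hwq : w ∈ q.support), w ≠ b → InR G (S \ {b}) w u := by
        intro w hwq hwb
        by_cases hbq : b ∈ q.support
        · rcases path_avoid_split hqpath hwq (Ne.symm hwb) with hav | hav
          · -- x → w avoids b
            have hxb : x ≠ b := by
              intro h; subst h; exact hav (start_mem_support _)
            have h1 : InR G (S \ {b}) x w := ⟨q.takeUntil w hwq, fun t ht =>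
              ⟨hqS t (support_takeUntil_subset _ _ ht), fun hh => hav (hh ▸ ht)⟩⟩
            exact h1.symm.trans (hBpart x hx.1 hxb)
          · have hyb : y ≠ b := by
              intro h; subst h; exact hav (end_mem_support _)
            have h1 : InR G (S \ {b}) w y := ⟨q.dropUntil w hwq, fun t ht =>
              ⟨hqS t (support_dropUntil_subset _ _ ht), fun hh => hav (hh ▸ ht)⟩⟩
            exact h1.trans (hB'part y hy.1 hyb)
        · have h1 : InR G (S \ {b}) w x := InR.symm ⟨q.takeUntil w hwq, fun t ht => by
            have h2 := support_takeUntil_subset q hwq ht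
            exact ⟨hqS t h2, fun hh => hbq (hh ▸ h2)⟩⟩
          have hxb : x ≠ b := fun h => hbq (h ▸ q.start_mem_support)
          exact h1.trans (hBpart x hx.1 hxb)
      have key : ∀ w ∈ S \ {b}, InR G (S \ {b}) w u := by
        intro w hw
        rcases hw.1 with (hwB | hwB') | hwq
        · exact hBpart w hwB hw.2
        · exact hB'part w hwB' hw.2
        · exact hqpart w hwq hw.2
      exact (key z hz).trans (key z' hz').symm
  -- S is biconnected
  have hbic : IsBiconn G S := by
    refine ⟨⟨x, hxS⟩, fun a b => ?_, fun b hb a a' => ?_⟩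
    · exact reach_induce_of_InR (((hconn a.1 a.2).trans (hconn b.1 b.2).symm)) a.2 b.2
    · exact reach_induce_of_InR (hdel b hb a.1 a.2 a'.1 a'.2) a.2 a'.2
  have h1 : B = S := hB.eq_of_subset hbic hBS
  have h2 : B' ⊆ B := h1 ▸ hB'S
  exact hne (hB'.eq_of_subset hB.1 h2).symm

end Cut
section TConn
variable {V : Type*} {G : SimpleGraph V}

lemma exists_block_mem [Fintype V] (v : V) : ∃ B, IsBlock G B ∧ v ∈ B := by
  obtain ⟨B, hB, hsub⟩ := exists_block_superset (G := G) (biconn_singleton v)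
  exact ⟨B, hB, hsub rfl⟩

lemma exists_block_edge [Fintype V] {u v : V} (h : G.Adj u v) :
    ∃ B, IsBlock G B ∧ u ∈ B ∧ v ∈ B := by
  obtain ⟨B, hB, hsub⟩ := exists_block_superset (G := G) (biconn_pair h)
  exact ⟨B, hB, hsub (by simp), hsub (by simp)⟩

lemma bt_adj_inl_inr {v : {v : V // IsCutVertex G v}} {B : {B : Set V // IsBlock G B}}
    (h : v.1 ∈ B.1) : (blockTree G).Adj (Sum.inl v) (Sum.inr B) :=
  Or.inl ⟨v, B, rfl, rfl, h⟩

lemma bt_adj_cases {x y : BTVert G} (h : (blockTree G).Adj x y) :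
    (∃ v B, x = Sum.inl v ∧ y = Sum.inr B ∧ v.1 ∈ B.1) ∨
    (∃ v B, x = Sum.inr B ∧ y = Sum.inl v ∧ v.1 ∈ B.1) := h

lemma bt_reach_share [Fintype V] (hG : G.Connected) (B B' : {B : Set V // IsBlock G B})
    {u : V} (hu : u ∈ B.1) (hu' : u ∈ B'.1) :
    (blockTree G).Reachable (Sum.inr B) (Sum.inr B') := by
  by_cases he : B = B'
  · subst he; rfl
  · have hne : B.1 ≠ B'.1 := fun h => he (Subtype.ext h)
    have hcut : IsCutVertex G u := cut_of_two_blocks hG B.2 B'.2 hne hu hu'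
    have h1 := (bt_adj_inl_inr (v := ⟨u, hcut⟩) (B := B) hu).symm
    have h2 := bt_adj_inl_inr (v := ⟨u, hcut⟩) (B := B') hu'
    exact h1.reachable.trans h2.reachable

lemma bt_reach_of_walk [Fintype V] (hG : G.Connected) {u u' : V} (p : G.Walk u u')
    (B B' : {B : Set V // IsBlock G B}) (hu : u ∈ B.1) (hu' : u' ∈ B'.1) :
    (blockTree G).Reachable (Sum.inr B) (Sum.inr B') := by
  induction p generalizing B with
  | nil => exact bt_reach_share hG B B' hu hu'
  | @cons a b c hab q ih =>
    obtain ⟨B2, hB2, haB2, hbB2⟩ := exists_block_edge hab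
    exact (bt_reach_share hG B ⟨B2, hB2⟩ hu haB2).trans (ih ⟨B2, hB2⟩ hbB2 hu')

lemma bt_preconnected [Fintype V] (hG : G.Connected) : (blockTree G).Preconnected := by
  have hinr : ∀ B B' : {B : Set V // IsBlock G B},
      (blockTree G).Reachable (Sum.inr B) (Sum.inr B') := by
    intro B B'
    obtain ⟨u, hu⟩ := B.2.1.1
    obtain ⟨u', hu'⟩ := B'.2.1.1
    obtain ⟨p⟩ := hG.preconnected u u'
    exact bt_reach_of_walk hG p B B' hu hu'
  have hstep : ∀ v : {v : V // IsCutVertex G v}, ∃ B : {B : Set V // IsBlock G B},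
      (blockTree G).Adj (Sum.inl v) (Sum.inr B) := by
    intro v
    obtain ⟨B, hB, hv⟩ := exists_block_mem v.1
    exact ⟨⟨B, hB⟩, bt_adj_inl_inr hv⟩
  rintro (v | B) (v' | B')
  · obtain ⟨Bv, h1⟩ := hstep v
    obtain ⟨Bv', h2⟩ := hstep v'
    exact (h1.reachable.trans (hinr Bv Bv')).trans h2.reachable.symm
  · obtain ⟨Bv, h1⟩ := hstep v
    exact h1.reachable.trans (hinr Bv B')
  · obtain ⟨Bv', h2⟩ := hstep v'
    exact (hinr B Bv').trans h2.reachable.symm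
  · exact hinr B B'

end TConn
section TAcyclic
variable {V : Type*} {G : SimpleGraph V}
open SimpleGraph.Walk

/-- Union of the blocks appearing on a walk in the block tree. -/
def blkU {s t : BTVert G} (p : (blockTree G).Walk s t) : Set V :=
  {z | ∃ B : {B : Set V // IsBlock G B}, Sum.inr B ∈ p.support ∧ z ∈ B.1}

lemma blkU_of_mem {s t : BTVert G} {p : (blockTree G).Walk s t}
    {B : {B : Set V // IsBlock G B}} (h : Sum.inr B ∈ p.support) : B.1 ⊆ blkU p :=
  fun z hz => ⟨B, h, hz⟩

lemma blkU_mono {s t s' t' : BTVert G} {p : (blockTree G).Walk s t}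
    {q : (blockTree G).Walk s' t'} (h : p.support ⊆ q.support) : blkU p ⊆ blkU q :=
  fun z ⟨B, hB, hz⟩ => ⟨B, h hB, hz⟩

lemma blkU_reverse {s t : BTVert G} (p : (blockTree G).Walk s t) :
    blkU p.reverse = blkU p := by
  ext z
  constructor <;> rintro ⟨B, hB, hz⟩ <;> refine ⟨B, ?_, hz⟩ <;>
    (erw [support_reverse, List.mem_reverse] at *; exact hB)

lemma blkU_cons_inr {Bh : {B : Set V // IsBlock G B}} {s' t : BTVert G}
    (h : (blockTree G).Adj (Sum.inr Bh) s') (q : (blockTree G).Walk s' t) :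
    blkU (cons h q) = Bh.1 ∪ blkU q := by
  ext z
  constructor
  · rintro ⟨B, hB, hz⟩
    erw [support_cons, List.mem_cons] at hB
    rcases hB with hB | hB
    · obtain rfl : Bh = B := by injection hB.symm
      exact Or.inl hz
    · exact Or.inr ⟨B, hB, hz⟩
  · rintro (hz | ⟨B, hB, hz⟩)
    · exact ⟨Bh, by erw [support_cons]; exact List.mem_cons_self, hz⟩
    · exact ⟨B, by erw [support_cons]; exact List.mem_cons_of_mem _ hB, hz⟩

lemma blkU_cons_inl {w : {v : V // IsCutVertex G v}} {s' t : BTVert G}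
    (h : (blockTree G).Adj (Sum.inl w) s') (q : (blockTree G).Walk s' t) :
    blkU (cons h q) = blkU q := by
  ext z
  constructor
  · rintro ⟨B, hB, hz⟩
    erw [support_cons, List.mem_cons] at hB
    rcases hB with hB | hB
    · exact absurd hB.symm (by simp)
    · exact ⟨B, hB, hz⟩
  · rintro ⟨B, hB, hz⟩
    exact ⟨B, by erw [support_cons]; exact List.mem_cons_of_mem _ hB, hz⟩

lemma chain_conn {s t : BTVert G} (p : (blockTree G).Walk s t) (hp : p.IsPath)
    (D : Set V) (hD : D.Subsingleton)
    (hlinks : ∀ w : {v : V // IsCutVertex G v}, Sum.inl w ∈ p.support →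
      Sum.inl w = t ∨ w.1 ∉ D) :
    ∀ x ∈ blkU p \ D, ∀ y ∈ blkU p \ D, InR G (blkU p \ D) x y := by
  induction p with
  | nil =>
    rename_i s0
    intro x hx y hy
    rcases s0 with w | B
    · exfalso
      obtain ⟨B, hB, -⟩ := hx.1
      erw [support_nil, List.mem_singleton] at hB
      exact absurd hB.symm (by simp)
    · have hU : blkU (Walk.nil : (blockTree G).Walk (Sum.inr B) _) = B.1 := by
        ext z
        constructor
        · rintro ⟨B', hB', hz⟩
          erw [support_nil, List.mem_singleton] at hB'
          obtain rfl : B = B' := by injection hB'.symm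
          exact hz
        · intro hz
          exact ⟨B, by erw [support_nil]; exact List.mem_singleton_self _, hz⟩
      rw [hU] at hx hy ⊢
      exact B.2.1.delSub hD hx hy
  | @cons s s' t h q ih =>
    rcases bt_adj_cases h with ⟨w, Bw, hs, hs', hmem⟩ | ⟨w, Bh, hs', hs, hmem⟩
    · -- head is a cut vertex
      subst hs; subst hs'
      erw [blkU_cons_inl]
      exact ih hp.of_cons (fun w' hw' => hlinks w' (by
        erw [support_cons]; exact List.mem_cons_of_mem _ hw'))
    · -- head is a block Bh, next is cut vertex w
      subst hs; subst hs'
      erw [blkU_cons_inr]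
      have hq : q.IsPath := hp.of_cons
      have ihq := ih hq (fun w' hw' => hlinks w' (by
        erw [support_cons]; exact List.mem_cons_of_mem _ hw'))
      have connB : ∀ z ∈ Bh.1 \ D, ∀ z' ∈ Bh.1 \ D, InR G ((Bh.1 ∪ blkU q) \ D) z z' := by
        intro z hz z' hz'
        exact (Bh.2.1.delSub hD hz hz').mono
          (fun a ha => ⟨Or.inl ha.1, ha.2⟩)
      have connU : ∀ z ∈ blkU q \ D, ∀ z' ∈ blkU q \ D,
          InR G ((Bh.1 ∪ blkU q) \ D) z z' := by
        intro z hz z' hz'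
        exact (ihq z hz z' hz').mono (fun a ha => ⟨Or.inr ha.1, ha.2⟩)
      have hmix : ∀ z ∈ Bh.1 \ D, ∀ z' ∈ blkU q \ D,
          InR G ((Bh.1 ∪ blkU q) \ D) z z' := by
        intro z hz z' hz'
        -- q must be nonnil
        cases q with
        | nil =>
          exfalso
          obtain ⟨B', hB', -⟩ := hz'.1
          erw [support_nil, List.mem_singleton] at hB'
          exact absurd hB'.symm (by simp)
        | @cons _ s'' _ h' q' =>
          rcases bt_adj_cases h' with ⟨w2, B2, hw2, hs'', hmem2⟩ | ⟨w2, B2, hs'', hw2, hmem2⟩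
          swap
          · exact absurd hs'' (by simp)
          have hww : w = w2 := by injection hw2
          subst hww
          subst hs''
          have hmemsup : Sum.inl w ∈ (cons h' q').support := start_mem_support _
          have hwU : w.1 ∈ blkU (cons h' q') := by
            refine blkU_of_mem ?_ hmem2
            erw [support_cons]
            exact List.mem_cons_of_mem _ (start_mem_support _)
          have hwD : w.1 ∉ D := by
            rcases hlinks w (by erw [support_cons]; exact List.mem_cons_of_mem _ hmemsup) with ht | ht
            · exfalso
              have hnd := hq.support_nodup
              erw [support_cons] at hnd
              have : Sum.inl w ∈ q'.support := ht ▸ end_mem_support q'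
              exact (List.nodup_cons.mp hnd).1 this
            · exact ht
          have h1 : InR G ((Bh.1 ∪ blkU (cons h' q')) \ D) z w.1 :=
            connB z hz w.1 ⟨hmem, hwD⟩
          have h2 := connU w.1 ⟨hwU, hwD⟩ z' hz'
          exact h1.trans h2
      intro x hx y hy
      rcases hx.1 with hx1 | hx1 <;> rcases hy.1 with hy1 | hy1
      · exact connB x ⟨hx1, hx.2⟩ y ⟨hy1, hy.2⟩
      · exact hmix x ⟨hx1, hx.2⟩ y ⟨hy1, hy.2⟩
      · exact (hmix y ⟨hy1, hy.2⟩ x ⟨hx1, hx.2⟩).symm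
      · exact connU x ⟨hx1, hx.2⟩ y ⟨hy1, hy.2⟩

end TAcyclic
section Bridge
variable {V : Type*} {G : SimpleGraph V}
open SimpleGraph.Walk

lemma bt_edge_in_walk [Fintype V] (hG : G.Connected)
    (v : {v : V // IsCutVertex G v}) (B : {B : Set V // IsBlock G B}) (hvB : v.1 ∈ B.1)
    (q0 : (blockTree G).Walk (Sum.inl v) (Sum.inr B)) :
    s(Sum.inl v, Sum.inr B) ∈ q0.edges := by
  by_contra hne
  -- pass to a path still missing the edge
  obtain ⟨q, hq, hqe⟩ : ∃ q : (blockTree G).Walk (Sum.inl v) (Sum.inr B),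
      q.IsPath ∧ s((Sum.inl v : BTVert G), Sum.inr B) ∉ q.edges :=
    ⟨q0.toPath, q0.toPath.2, by intro h; exact hne (edges_toPath_subset q0 h)⟩
  clear hne
  cases q with
  | @cons _ s' _ h rest =>
    rcases bt_adj_cases h with ⟨v2, B1, hv2, hs', hmem1⟩ | ⟨v2, B1, hs', hv2, hmem1⟩
    swap
    · exact absurd hs' (by simp)
    have hvv : v = v2 := by injection hv2
    subst hvv
    subst hs'
    -- first block B1 ≠ B
    have hB1B : B1 ≠ B := by
      rintro rfl
      exact hqe (by erw [edges_cons]; exact List.mem_cons_self)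
    have hrest : rest.IsPath := hq.of_cons
    have hvnot : (Sum.inl v : BTVert G) ∉ rest.support := by
      have := hq.support_nodup
      erw [support_cons] at this
      exact (List.nodup_cons.mp this).1
    set U : Set V := blkU rest with hU
    have hBU : B.1 ⊆ U := blkU_of_mem (end_mem_support rest)
    have hB1U : B1.1 ⊆ U := blkU_of_mem (start_mem_support rest)
    -- U is biconnected
    have hbic : IsBiconn G U := by
      have hconn0 : ∀ x ∈ U, ∀ y ∈ U, InR G U x y := by
        intro x hx y hy
        have := chain_conn rest hrest ∅ Set.subsingleton_empty
          (fun w _ => Or.inr (Set.notMem_empty _)) x (by simpa using hx) y (by simpa using hy)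
        simpa using this
      refine ⟨⟨v.1, hBU hvB⟩, fun x y => ?_, fun b hb x y => ?_⟩
      · exact reach_induce_of_InR (hconn0 x.1 x.2 y.1 y.2) x.2 y.2
      · -- delete b
        have hdel : ∀ z ∈ U \ {b}, ∀ z' ∈ U \ {b}, InR G (U \ {b}) z z' := by
          rcases Classical.em (∃ hbcut : IsCutVertex G b, Sum.inl (⟨b, hbcut⟩ :
              {v : V // IsCutVertex G v}) ∈ rest.support) with hcb | hcb
          · obtain ⟨hbcut, hbmem⟩ := hcb
            set bb : {v : V // IsCutVertex G v} := ⟨b, hbcut⟩ with hbb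
            set p₁ := rest.takeUntil (Sum.inl bb) hbmem with hp₁
            set p₂ := rest.dropUntil (Sum.inl bb) hbmem with hp₂
            have hp₁path : p₁.IsPath := hrest.takeUntil _
            have hp₂path : p₂.IsPath := hrest.dropUntil _
            have hsplit : U = blkU p₁ ∪ blkU p₂ := by
              apply Set.eq_of_subset_of_subset
              · rintro z ⟨B', hB', hz⟩
                erw [← take_spec rest hbmem, support_append, List.mem_append] at hB'
                rcases hB' with hB' | hB'
                · exact Or.inl ⟨B', hB', hz⟩
                · exact Or.inr ⟨B', List.mem_of_mem_tail hB', hz⟩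
              · rintro z (⟨B', hB', hz⟩ | ⟨B', hB', hz⟩)
                · exact ⟨B', support_takeUntil_subset _ _ hB', hz⟩
                · exact ⟨B', support_dropUntil_subset _ _ hB', hz⟩
            have hc₁ : ∀ z ∈ blkU p₁ \ {b}, ∀ z' ∈ blkU p₁ \ {b},
                InR G (blkU p₁ \ {b}) z z' := by
              refine chain_conn p₁ hp₁path {b} (Set.subsingleton_singleton) ?_
              intro w hw
              by_cases hwb : w.1 = b
              · left
                have : w = bb := Subtype.ext hwb
                rw [this]
              · exact Or.inr (by simpa using hwb)
            have hc₂ : ∀ z ∈ blkU p₂ \ {b}, ∀ z' ∈ blkU p₂ \ {b},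
                InR G (blkU p₂ \ {b}) z z' := by
              intro z hz z' hz'
              have hrev := chain_conn p₂.reverse hp₂path.reverse {b}
                Set.subsingleton_singleton ?hl
              case hl =>
                intro w hw
                erw [support_reverse, List.mem_reverse] at hw
                by_cases hwb : w.1 = b
                · left
                  have : w = bb := Subtype.ext hwb
                  rw [this]
                · exact Or.inr (by simpa using hwb)
              erw [blkU_reverse] at hrev
              exact hrev z hz z' hz'
            -- glue point v.1
            have hvp₁ : v.1 ∈ blkU p₁ := blkU_of_mem (start_mem_support p₁) hmem1
            have hvp₂ : v.1 ∈ blkU p₂ := blkU_of_mem (end_mem_support p₂) hvB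
            have hvb : v.1 ≠ b := by
              intro hh
              apply hvnot
              have : v = bb := Subtype.ext hh
              rw [this]
              exact hbmem
            have hkey : ∀ z ∈ U \ {b}, InR G (U \ {b}) z v.1 := by
              intro z hz
              have hzU := hz.1
              rw [hsplit] at hzU
              rcases hzU with hz1 | hz1
              · exact (hc₁ z ⟨hz1, hz.2⟩ v.1 ⟨hvp₁, by simpa using hvb⟩).mono
                  (fun a ha => ⟨by rw [hsplit]; exact Or.inl ha.1, ha.2⟩)
              · exact (hc₂ z ⟨hz1, hz.2⟩ v.1 ⟨hvp₂, by simpa using hvb⟩).mono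
                  (fun a ha => ⟨by rw [hsplit]; exact Or.inr ha.1, ha.2⟩)
            intro z hz z' hz'
            exact (hkey z hz).trans (hkey z' hz').symm
          · -- b not a link: direct chain connectivity
            have := chain_conn rest hrest {b} Set.subsingleton_singleton ?hl
            case hl =>
              intro w hw
              right
              intro hwD
              rw [Set.mem_singleton_iff] at hwD
              exact hcb ⟨hwD ▸ w.2, by
                have : w = ⟨b, hwD ▸ w.2⟩ := Subtype.ext hwD
                rw [← this]; exact hw⟩
            exact this
        exact reach_induce_of_InR (hdel x.1 x.2 y.1 y.2) x.2 y.2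
    have h1 : B.1 = U := B.2.eq_of_subset hbic hBU
    have h2 : B1.1 ⊆ B.1 := h1 ▸ hB1U
    have h3 : B1.1 = B.1 := B1.2.eq_of_subset B.2.1 h2
    exact hB1B (Subtype.ext h3)

lemma bt_acyclic [Fintype V] (hG : G.Connected) : (blockTree G).IsAcyclic := by
  rw [SimpleGraph.isAcyclic_iff_forall_edge_isBridge]
  intro e he
  induction e with
  | _ a b =>
    rw [SimpleGraph.mem_edgeSet] at he
    rcases bt_adj_cases he with ⟨v, B, rfl, rfl, hmem⟩ | ⟨v, B, rfl, rfl, hmem⟩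
    · erw [SimpleGraph.isBridge_iff]
      erw [SimpleGraph.reachable_delete_edges_iff_exists_walk]
      rintro ⟨p, hp⟩
      exact hp (bt_edge_in_walk hG v B hmem p)
    · erw [Sym2.eq_swap, SimpleGraph.isBridge_iff]
      erw [SimpleGraph.reachable_delete_edges_iff_exists_walk]
      rintro ⟨p, hp⟩
      exact hp (bt_edge_in_walk hG v B hmem p)

end Bridge
section Centroid
variable {N : Type*} [Fintype N] {T : SimpleGraph N} {w : N → ℕ}
open SimpleGraph.Walk

/-- Reachability avoiding a vertex. -/
def AvoidR (T : SimpleGraph N) (m x y : N) : Prop :=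
  ∃ p : T.Walk x y, m ∉ p.support

lemma compWeight_def (m u : N) :
    compWeight T w m u = ∑ y : N, if AvoidR T m u y then w y else 0 := rfl

namespace AvoidR

lemma rfl' {m x : N} (h : x ≠ m) : AvoidR T m x x :=
  ⟨Walk.nil, by simp [Ne.symm h]⟩

lemma symm {m x y : N} (h : AvoidR T m x y) : AvoidR T m y x := by
  obtain ⟨p, hp⟩ := h
  exact ⟨p.reverse, by simpa using hp⟩

lemma trans {m x y z : N} (h : AvoidR T m x y) (h' : AvoidR T m y z) : AvoidR T m x z := by
  obtain ⟨p, hp⟩ := h; obtain ⟨q, hq⟩ := h'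
  refine ⟨p.append q, ?_⟩
  rw [mem_support_append_iff]
  tauto

lemma of_adj {m x y : N} (h : T.Adj x y) (hx : m ≠ x) (hy : m ≠ y) : AvoidR T m x y :=
  ⟨h.toWalk, by simp [hx, hy]⟩

lemma not_left {m y : N} : ¬ AvoidR T m m y := by
  rintro ⟨p, hp⟩; exact hp p.start_mem_support

lemma not_right {m y : N} : ¬ AvoidR T m y m := by
  rintro ⟨p, hp⟩; exact hp p.end_mem_support

lemma ne_left {m x y : N} (h : AvoidR T m x y) : x ≠ m := by
  rintro rfl; exact not_left h

lemma mem {m x y z : N} (h : AvoidR T m x y) : ∀ (p : T.Walk x y), m ∉ p.support →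
    z ∈ p.support → AvoidR T m x z := by
  intro p hp hz
  exact ⟨p.takeUntil z hz, fun hc => hp (support_takeUntil_subset _ _ hc)⟩

end AvoidR

lemma avoidR_mem_support {m x y z : N} (p : T.Walk x y) (hp : m ∉ p.support)
    (hz : z ∈ p.support) : AvoidR T m x z :=
  ⟨p.takeUntil z hz, fun hc => hp (support_takeUntil_subset _ _ hc)⟩

lemma compWeight_le_hs (m u : N) : compWeight T w m u ≤ hs T w m :=
  Finset.le_sup (Finset.mem_univ u)

lemma hs_attained [Nonempty N] (m : N) : ∃ u, hs T w m = compWeight T w m u := by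
  obtain ⟨u, -, hu⟩ := Finset.exists_mem_eq_sup (Finset.univ : Finset N)
    Finset.univ_nonempty (fun u => compWeight T w m u)
  exact ⟨u, hu⟩

lemma compWeight_self (m : N) : compWeight T w m m = 0 := by
  rw [compWeight_def]
  refine Finset.sum_eq_zero fun y _ => ?_
  rw [if_neg AvoidR.not_left]

lemma compWeight_congr {m u u' : N} (h : AvoidR T m u u') :
    compWeight T w m u = compWeight T w m u' := by
  rw [compWeight_def, compWeight_def]
  refine Finset.sum_congr rfl fun y _ => ?_
  congr 1
  apply propext
  exact ⟨fun h' => h.symm.trans h', fun h' => h.trans h'⟩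

lemma single_le_compWeight {m u : N} (h : u ≠ m) : w u ≤ compWeight T w m u := by
  rw [compWeight_def]
  calc w u = (fun y => if AvoidR T m u y then w y else 0) u := by
        simp only [if_pos (AvoidR.rfl' (T := T) h)]
    _ ≤ ∑ y : N, if AvoidR T m u y then w y else 0 :=
        Finset.single_le_sum (f := fun y => if AvoidR T m u y then w y else 0)
          (fun y _ => Nat.zero_le _) (Finset.mem_univ u)

/-- Convexity of `hs` across a separator. -/
lemma hs_le_max {m x y : N} (hxm : x ≠ m) (hym : y ≠ m) (hsep : ¬ AvoidR T m x y) :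
    hs T w m ≤ max (hs T w x) (hs T w y) := by
  have hne : Nonempty N := ⟨x⟩
  obtain ⟨z, hz⟩ := hs_attained (w := w) (T := T) m
  by_cases hzm : z = m
  · rw [hz, hzm, compWeight_self]; exact Nat.zero_le _
  by_cases hAR : AvoidR T m x z
  · -- z is on x's side: bound by hs y
    have hle : compWeight T w m z ≤ compWeight T w y z := by
      rw [compWeight_def, compWeight_def]
      refine Finset.sum_le_sum fun t _ => ?_
      by_cases ht : AvoidR T m z t
      · rw [if_pos ht]
        obtain ⟨p, hp⟩ := ht
        have hyp : y ∉ p.support := by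
          intro hyp
          exact hsep (hAR.trans (avoidR_mem_support p hp hyp))
        rw [if_pos ⟨p, hyp⟩]
      · rw [if_neg ht]; exact Nat.zero_le _
    rw [hz]
    exact le_max_of_le_right (hle.trans (compWeight_le_hs _ _))
  · have hle : compWeight T w m z ≤ compWeight T w x z := by
      rw [compWeight_def, compWeight_def]
      refine Finset.sum_le_sum fun t _ => ?_
      by_cases ht : AvoidR T m z t
      · rw [if_pos ht]
        obtain ⟨p, hp⟩ := ht
        have hxp : x ∉ p.support := by
          intro hxp
          exact hAR ((avoidR_mem_support p hp hxp).symm)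
        rw [if_pos ⟨p, hxp⟩]
      · rw [if_neg ht]; exact Nat.zero_le _
    rw [hz]
    exact le_max_of_le_left (hle.trans (compWeight_le_hs _ _))

/-- For an edge of a tree, the two sides partition the total weight. -/
lemma edge_partition (hpre : T.Preconnected) (hacy : T.IsAcyclic) {u v : N}
    (hadj : T.Adj u v) :
    compWeight T w u v + compWeight T w v u = ∑ y : N, w y := by
  rw [compWeight_def, compWeight_def, ← Finset.sum_add_distrib]
  refine Finset.sum_congr rfl fun y _ => ?_
  have hcover : AvoidR T u v y ∨ AvoidR T v u y := by
    obtain ⟨p0⟩ := hpre v y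
    obtain ⟨P, hPpath⟩ : ∃ P : T.Walk v y, P.IsPath := ⟨p0.toPath, p0.toPath.2⟩
    by_cases hu : u ∈ P.support
    · right
      refine ⟨P.dropUntil u hu, ?_⟩
      intro hv
      have hnd := hPpath.support_nodup
      rw [← take_spec P hu, support_append] at hnd
      have hv' : v ∈ (P.dropUntil u hu).support.tail := by
        have hc := support_eq_cons (P.dropUntil u hu)
        rw [hc, List.mem_cons] at hv
        exact hv.resolve_left (fun h => hadj.ne h.symm)
      exact (List.disjoint_of_nodup_append hnd) (start_mem_support _) hv'
    · exact Or.inl ⟨P, hu⟩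
  have hdisj : ¬ (AvoidR T u v y ∧ AvoidR T v u y) := by
    rintro ⟨⟨p, hp⟩, ⟨q, hq⟩⟩
    -- two distinct paths from v to y
    have hppath : (p.toPath : T.Walk v y).IsPath := p.toPath.2
    have hqpath : (q.toPath : T.Walk u y).IsPath := q.toPath.2
    have hpu : u ∉ (p.toPath : T.Walk v y).support :=
      fun hc => hp (support_toPath_subset p hc)
    have hqv : v ∉ (q.toPath : T.Walk u y).support :=
      fun hc => hq (support_toPath_subset q hc)
    have hBpath : (Walk.cons hadj.symm (q.toPath : T.Walk u y)).IsPath := by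
      rw [cons_isPath_iff]
      exact ⟨hqpath, hqv⟩
    have := SimpleGraph.isAcyclic_iff_path_unique.mp hacy
      ⟨(p.toPath : T.Walk v y), hppath⟩ ⟨Walk.cons hadj.symm (q.toPath : T.Walk u y), hBpath⟩
    have hsupp := congrArg (fun r : T.Path v y => (r : T.Walk v y).support) this
    simp only at hsupp
    apply hpu
    rw [hsupp, support_cons]
    exact List.mem_cons_of_mem _ (start_mem_support _)
  by_cases h1 : AvoidR T u v y
  · rw [if_pos h1, if_neg (fun h2 => hdisj ⟨h1, h2⟩), Nat.add_zero]
  · rcases hcover with h | h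
    · exact absurd h h1
    · rw [if_neg h1, if_pos h, Nat.zero_add]

/-- Distinct neighbors of `m` lie in different components of `T - m`. -/
lemma branch_sep (hacy : T.IsAcyclic) {m t₁ t₂ : N} (h1 : T.Adj m t₁) (h2 : T.Adj m t₂)
    (hne : t₁ ≠ t₂) : ¬ AvoidR T m t₁ t₂ := by
  rintro ⟨p, hp⟩
  have hppath : (p.toPath : T.Walk t₁ t₂).IsPath := p.toPath.2
  have hpm : m ∉ (p.toPath : T.Walk t₁ t₂).support :=
    fun hc => hp (support_toPath_subset p hc)
  have hBpath : (Walk.cons h1.symm (Walk.cons h2 Walk.nil)).IsPath := by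
    rw [cons_isPath_iff, cons_isPath_iff]
    refine ⟨⟨IsPath.nil, by simp [h2.ne]⟩, by simp [h1.ne', hne]⟩
  have := SimpleGraph.isAcyclic_iff_path_unique.mp hacy
    ⟨(p.toPath : T.Walk t₁ t₂), hppath⟩ ⟨Walk.cons h1.symm (Walk.cons h2 Walk.nil), hBpath⟩
  have hsupp := congrArg (fun r : T.Path t₁ t₂ => (r : T.Walk t₁ t₂).support) this
  simp only at hsupp
  apply hpm
  rw [hsupp, support_cons]
  exact List.mem_cons_of_mem _ (start_mem_support _)

/-- Between two nonadjacent vertices there is an interior separator adjacent to `x`. -/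
lemma exists_interior (hacy : T.IsAcyclic) {x y : N} (hxy : x ≠ y) (hnadj : ¬ T.Adj x y)
    (hreach : T.Reachable x y) :
    ∃ m, T.Adj x m ∧ m ≠ x ∧ m ≠ y ∧ ¬ AvoidR T m x y := by
  obtain ⟨p0⟩ := hreach
  obtain ⟨q, hq⟩ : ∃ q : T.Walk x y, q.IsPath := ⟨p0.toPath, p0.toPath.2⟩
  cases q with
  | nil => exact absurd rfl hxy
  | @cons _ m _ h rest =>
    refine ⟨m, h, h.ne', fun hmy => hnadj (hmy ▸ h), ?_⟩
    rintro ⟨r, hr⟩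
    have hrpath : (r.toPath : T.Walk x y).IsPath := r.toPath.2
    have hrm : m ∉ (r.toPath : T.Walk x y).support :=
      fun hc => hr (support_toPath_subset r hc)
    have := SimpleGraph.isAcyclic_iff_path_unique.mp hacy
      ⟨(r.toPath : T.Walk x y), hrpath⟩ ⟨Walk.cons h rest, hq⟩
    have hsupp := congrArg (fun s : T.Path x y => (s : T.Walk x y).support) this
    simp only at hsupp
    apply hrm
    rw [hsupp, support_cons]
    exact List.mem_cons_of_mem _ (start_mem_support _)

end Centroid
section Sums
variable {N : Type*} [Fintype N] {T : SimpleGraph N} {w : N → ℕ}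

lemma three_sep_sum {z p q : N} (hsep : ¬ AvoidR T z p q) :
    compWeight T w z p + compWeight T w z q + w z ≤ ∑ y : N, w y := by
  rw [compWeight_def, compWeight_def]
  have hterm : ∀ y : N, (if AvoidR T z p y then w y else 0) +
      (if AvoidR T z q y then w y else 0) + (if y = z then w y else 0) ≤ w y := by
    intro y
    by_cases h4 : y = z
    · subst h4
      rw [if_pos rfl, if_neg (AvoidR.not_right), if_neg (AvoidR.not_right)]
      simp
    · rw [if_neg h4]
      by_cases h1 : AvoidR T z p y
      · rw [if_pos h1, if_neg (fun h2 => hsep (h1.trans h2.symm))]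
        simp
      · rw [if_neg h1]
        split_ifs <;> simp
  have hD : (∑ y : N, if y = z then w y else 0) = w z := by
    rw [Finset.sum_ite_eq' Finset.univ z w]
    exact if_pos (Finset.mem_univ z)
  calc (∑ y : N, if AvoidR T z p y then w y else 0)
        + (∑ y : N, if AvoidR T z q y then w y else 0) + w z
      = (∑ y : N, if AvoidR T z p y then w y else 0)
        + (∑ y : N, if AvoidR T z q y then w y else 0)
        + (∑ y : N, if y = z then w y else 0) := by rw [hD]
    _ = ∑ y : N, ((if AvoidR T z p y then w y else 0)
        + (if AvoidR T z q y then w y else 0) + (if y = z then w y else 0)) := by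
        rw [← Finset.sum_add_distrib, ← Finset.sum_add_distrib]
    _ ≤ ∑ y : N, w y := Finset.sum_le_sum (fun y _ => hterm y)

lemma four_sep_sum {z p q r : N} (hpq : ¬ AvoidR T z p q) (hpr : ¬ AvoidR T z p r)
    (hqr : ¬ AvoidR T z q r) :
    compWeight T w z p + compWeight T w z q + compWeight T w z r + w z ≤ ∑ y : N, w y := by
  rw [compWeight_def, compWeight_def, compWeight_def]
  have hterm : ∀ y : N, (if AvoidR T z p y then w y else 0) +
      (if AvoidR T z q y then w y else 0) + (if AvoidR T z r y then w y else 0)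
      + (if y = z then w y else 0) ≤ w y := by
    intro y
    by_cases h4 : y = z
    · subst h4
      rw [if_pos rfl, if_neg (AvoidR.not_right), if_neg (AvoidR.not_right),
        if_neg (AvoidR.not_right)]
      simp
    · rw [if_neg h4]
      by_cases h1 : AvoidR T z p y
      · rw [if_pos h1, if_neg (fun h2 => hpq (h1.trans h2.symm)),
          if_neg (fun h3 => hpr (h1.trans h3.symm))]
        simp
      · rw [if_neg h1]
        by_cases h2 : AvoidR T z q y
        · rw [if_pos h2, if_neg (fun h3 => hqr (h2.trans h3.symm))]
          simp
        · rw [if_neg h2]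
          split_ifs <;> simp
  have hD : (∑ y : N, if y = z then w y else 0) = w z := by
    rw [Finset.sum_ite_eq' Finset.univ z w]
    exact if_pos (Finset.mem_univ z)
  calc (∑ y : N, if AvoidR T z p y then w y else 0)
        + (∑ y : N, if AvoidR T z q y then w y else 0)
        + (∑ y : N, if AvoidR T z r y then w y else 0) + w z
      = (∑ y : N, if AvoidR T z p y then w y else 0)
        + (∑ y : N, if AvoidR T z q y then w y else 0)
        + (∑ y : N, if AvoidR T z r y then w y else 0)
        + (∑ y : N, if y = z then w y else 0) := by rw [hD]
    _ = ∑ y : N, ((if AvoidR T z p y then w y else 0)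
        + (if AvoidR T z q y then w y else 0) + (if AvoidR T z r y then w y else 0)
        + (if y = z then w y else 0)) := by
        rw [← Finset.sum_add_distrib, ← Finset.sum_add_distrib, ← Finset.sum_add_distrib]
    _ ≤ ∑ y : N, w y := Finset.sum_le_sum (fun y _ => hterm y)

end Sums
section BTCore
variable {V : Type*} [Fintype V] {G : SimpleGraph V} [Fintype (BTVert G)]

lemma btWeight_inl (v : {v : V // IsCutVertex G v}) : btWeight G (Sum.inl v) = 1 := rfl

lemma bt_eq_inr_of_weight_zero {c : BTVert G} (h : btWeight G c = 0) :
    ∃ B : {B : Set V // IsBlock G B}, c = Sum.inr B := by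
  cases c with
  | inl v => exact absurd h (by rw [btWeight_inl]; exact one_ne_zero)
  | inr B => exact ⟨B, rfl⟩

lemma bt_not_adj_inl_inl (v v' : {v : V // IsCutVertex G v}) :
    ¬ (blockTree G).Adj (Sum.inl v) (Sum.inl v') := by
  rintro (⟨_, _, _, h, -⟩ | ⟨_, _, h, -, -⟩) <;> simp_all

lemma bt_not_adj_inr_inr (B B' : {B : Set V // IsBlock G B}) :
    ¬ (blockTree G).Adj (Sum.inr B) (Sum.inr B') := by
  rintro (⟨_, _, h, -, -⟩ | ⟨_, _, _, h, -⟩) <;> simp_all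

lemma bt_one_le_W {x y : BTVert G} (h : (blockTree G).Adj x y) :
    1 ≤ ∑ t : BTVert G, btWeight G t := by
  have key : ∀ v : {v : V // IsCutVertex G v}, 1 ≤ ∑ t : BTVert G, btWeight G t := by
    intro v
    have hx : (Sum.inl v : BTVert G) ∈ (Finset.univ : Finset (BTVert G)) :=
      @Finset.mem_univ (BTVert G) ‹Fintype (BTVert G)› _
    calc 1 = btWeight G (Sum.inl v) := rfl
      _ ≤ ∑ t : BTVert G, btWeight G t :=
        Finset.single_le_sum (fun t _ => Nat.zero_le _) hx
  rcases bt_adj_cases h with ⟨v, B, rfl, rfl, -⟩ | ⟨v, B, rfl, rfl, -⟩ <;> exact key v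

lemma bt_core (hG : G.Connected) {p q z : BTVert G} (hpq : p ≠ q)
    (hzp : (blockTree G).Adj z p) (hzq : (blockTree G).Adj z q)
    (hcp : IsCentroid (blockTree G) (btWeight G) p)
    (hcq : IsCentroid (blockTree G) (btWeight G) q)
    (hcz : IsCentroid (blockTree G) (btWeight G) z)
    (hcase : hs (blockTree G) (btWeight G) z = compWeight (blockTree G) (btWeight G) z p) :
    btWeight G z = 0 ∧ ∀ t, (blockTree G).Adj z t → t = p ∨ t = q := by
  have hpre := bt_preconnected hG
  have hacy := bt_acyclic hG
  set T := blockTree G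
  set ww := btWeight G with hww
  set W := ∑ t : BTVert G, ww t with hW
  set h := hs T ww z with hh
  have hhp : hs T ww p = h := le_antisymm (hcp z) (hcz p)
  have hhq : hs T ww q = h := le_antisymm (hcq z) (hcz q)
  set a := compWeight T ww z p with ha
  set b := compWeight T ww z q with hb
  have hA2 : b ≤ h := compWeight_le_hs z q
  have hA3 : a + compWeight T ww p z = W := edge_partition hpre hacy hzp
  have hA4 : b + compWeight T ww q z = W := edge_partition hpre hacy hzq
  have hA5 : compWeight T ww p z ≤ h := hhp ▸ compWeight_le_hs p z
  have hA6 : compWeight T ww q z ≤ h := hhq ▸ compWeight_le_hs q z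
  have hA7 : a + b + ww z ≤ W := three_sep_sum (branch_sep hacy hzp hzq hpq)
  have hz0 : ww z = 0 := by omega
  refine ⟨hz0, fun t ht => ?_⟩
  by_contra hnot
  push_neg at hnot
  obtain ⟨htp, htq⟩ := hnot
  have hA8 : a + b + compWeight T ww z t + ww z ≤ W :=
    four_sep_sum (branch_sep hacy hzp hzq hpq) (branch_sep hacy hzp ht htp.symm)
      (branch_sep hacy hzq ht htq.symm)
  have ht0 : compWeight T ww z t = 0 := by omega
  have hwt : ww t = 0 := by
    have := single_le_compWeight (T := T) (w := ww) (m := z) (u := t) ht.ne'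
    omega
  obtain ⟨Bt, rfl⟩ := bt_eq_inr_of_weight_zero hwt
  obtain ⟨Bz, rfl⟩ := bt_eq_inr_of_weight_zero hz0
  exact bt_not_adj_inr_inr Bz Bt ht

lemma bt_central (hG : G.Connected) {p q z : BTVert G} (hpq : p ≠ q) (hpz : p ≠ z)
    (hqz : q ≠ z)
    (hzp : (blockTree G).Adj z p) (hzq : (blockTree G).Adj z q)
    (hcp : IsCentroid (blockTree G) (btWeight G) p)
    (hcq : IsCentroid (blockTree G) (btWeight G) q)
    (hcz : IsCentroid (blockTree G) (btWeight G) z) :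
    btWeight G z = 0 ∧ ∀ t, (blockTree G).Adj z t → t = p ∨ t = q := by
  have hpre := bt_preconnected hG
  have hacy := bt_acyclic hG
  set T := blockTree G
  set ww := btWeight G with hww
  have hnN : Nonempty (BTVert G) := ⟨z⟩
  obtain ⟨zs, hzs⟩ := hs_attained (T := T) (w := ww) z
  by_cases hzsz : zs = z
  · -- heaviest component is empty: total weight 0, contradiction
    exfalso
    rw [hzsz, compWeight_self] at hzs
    have hA3 : compWeight T ww z p + compWeight T ww p z = ∑ t : BTVert G, ww t :=
      edge_partition hpre hacy hzp
    have h1 : compWeight T ww z p ≤ hs T ww z := compWeight_le_hs z p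
    have h2 : compWeight T ww p z ≤ hs T ww p := compWeight_le_hs p z
    have h3 : hs T ww p = hs T ww z := le_antisymm (hcp z) (hcz p)
    have h4 : 1 ≤ ∑ t : BTVert G, ww t := bt_one_le_W hzp
    omega
  by_cases h1 : AvoidR T z p zs
  · exact bt_core hG hpq hzp hzq hcp hcq hcz (hzs.trans (compWeight_congr h1).symm)
  by_cases h2 : AvoidR T z q zs
  · have := bt_core hG hpq.symm hzq hzp hcq hcp hcz (hzs.trans (compWeight_congr h2).symm)
    exact ⟨this.1, fun t ht => (this.2 t ht).symm⟩
  · exfalso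
    have hA : compWeight T ww z p + compWeight T ww z q + compWeight T ww z zs + ww z
        ≤ ∑ t : BTVert G, ww t :=
      four_sep_sum (branch_sep hacy hzp hzq hpq) h1 h2
    have hA3 : compWeight T ww z p + compWeight T ww p z = ∑ t : BTVert G, ww t :=
      edge_partition hpre hacy hzp
    have hA5 : compWeight T ww p z ≤ hs T ww z :=
      (le_antisymm (hcp z) (hcz p)) ▸ compWeight_le_hs p z
    have hb0 : compWeight T ww z q = 0 ∧ ww z = 0 := by omega
    have hwq : ww q = 0 := by
      have := single_le_compWeight (T := T) (w := ww) (m := z) (u := q) hzq.ne'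
      omega
    obtain ⟨Bq, rfl⟩ := bt_eq_inr_of_weight_zero hwq
    obtain ⟨Bz, rfl⟩ := bt_eq_inr_of_weight_zero hb0.2
    exact bt_not_adj_inr_inr Bz Bq hzq

end BTCore
section Main
variable {V : Type*} [Fintype V] {G : SimpleGraph V} [Fintype (BTVert G)]

lemma adj_of_InR_pair {α β : V} (hne : α ≠ β) (h : InR G {α, β} α β) : G.Adj α β := by
  obtain ⟨p, hp⟩ := h
  cases p with
  | nil => exact absurd rfl hne
  | @cons _ b _ hadj q =>
    have hb : b ∈ ({α, β} : Set V) := hp b (by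
      rw [SimpleGraph.Walk.support_cons]
      exact List.mem_cons_of_mem _ q.start_mem_support)
    rcases hb with rfl | rfl
    · exact absurd rfl hadj.ne
    · exact hadj

lemma bt_main (hG : G.Connected) {x y z c : BTVert G}
    (hcx : IsCentroid (blockTree G) (btWeight G) x)
    (hcy : IsCentroid (blockTree G) (btWeight G) y)
    (hcz : IsCentroid (blockTree G) (btWeight G) z)
    (hxy : x ≠ y) (hxz : x ≠ z) (hyz : y ≠ z)
    (hall : ∀ m, IsCentroid (blockTree G) (btWeight G) m → m = x ∨ m = y ∨ m = z)
    (hnadj : ¬ (blockTree G).Adj x y)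
    (hc : IsCentralCentroid (blockTree G) (btWeight G) c) :
    btWeight G c = 0 ∧
    ∃ B : {B : Set V // IsBlock G B}, c = Sum.inr B ∧
      ∃ a b : V, a ≠ b ∧ B.1 = {a, b} ∧ G.Adj a b := by
  have hpre := bt_preconnected hG
  have hacy := bt_acyclic hG
  set T := blockTree G
  set ww := btWeight G with hww
  have hreach : T.Reachable x y := hpre x y
  -- z is adjacent to x
  have hAdjxz : T.Adj x z := by
    obtain ⟨m, hxm, hmx, hmy, hsep⟩ := exists_interior hacy hxy hnadj hreach
    have hcm : IsCentroid T ww m := by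
      intro u
      have h1 : hs T ww m ≤ max (hs T ww x) (hs T ww y) :=
        hs_le_max (Ne.symm hmx) (Ne.symm hmy) hsep
      exact h1.trans (max_le (hcx u) (hcy u))
    have : m = z := by
      rcases hall m hcm with h | h | h
      · exact absurd h hmx
      · exact absurd h hmy
      · exact h
    rw [← this]
    exact hxm
  have hAdjyz : T.Adj y z := by
    obtain ⟨m, hym, hmy, hmx, hsep⟩ := exists_interior hacy (Ne.symm hxy)
      (fun h => hnadj h.symm) hreach.symm
    have hcm : IsCentroid T ww m := by
      intro u
      have h1 : hs T ww m ≤ max (hs T ww y) (hs T ww x) :=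
        hs_le_max (Ne.symm hmy) (Ne.symm hmx) hsep
      exact h1.trans (max_le (hcy u) (hcx u))
    have : m = z := by
      rcases hall m hcm with h | h | h
      · exact absurd h hmx
      · exact absurd h hmy
      · exact h
    rw [← this]
    exact hym
  -- eccentricity comparison: c = z
  have hecz : centroidEcc T ww z ≤ 1 := by
    refine Finset.sup_le fun t _ => ?_
    by_cases hct : IsCentroid T ww t
    · rw [if_pos hct]
      rcases hall t hct with rfl | rfl | rfl
      · exact le_of_eq (SimpleGraph.dist_eq_one_iff_adj.mpr hAdjxz.symm)
      · exact le_of_eq (SimpleGraph.dist_eq_one_iff_adj.mpr hAdjyz.symm)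
      · rw [SimpleGraph.dist_self]; exact Nat.zero_le _
    · rw [if_neg hct]; exact Nat.zero_le _
  have hdxy : 2 ≤ T.dist x y := by
    have h0 : 0 < T.dist x y := hreach.pos_dist_of_ne hxy
    have h1 : T.dist x y ≠ 1 := fun h => hnadj (SimpleGraph.dist_eq_one_iff_adj.mp h)
    omega
  have heccx : 2 ≤ centroidEcc T ww x := by
    have hy' : y ∈ (Finset.univ : Finset (BTVert G)) :=
      @Finset.mem_univ (BTVert G) ‹Fintype (BTVert G)› _
    have h1 : (if IsCentroid T ww y then T.dist x y else 0) ≤ centroidEcc T ww x := by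
      unfold centroidEcc
      exact Finset.le_sup (f := fun t => if IsCentroid T ww t then T.dist x t else 0) hy'
    rw [if_pos hcy] at h1
    omega
  have heccy : 2 ≤ centroidEcc T ww y := by
    have hx' : x ∈ (Finset.univ : Finset (BTVert G)) :=
      @Finset.mem_univ (BTVert G) ‹Fintype (BTVert G)› _
    have h1 : (if IsCentroid T ww x then T.dist y x else 0) ≤ centroidEcc T ww y := by
      unfold centroidEcc
      exact Finset.le_sup (f := fun t => if IsCentroid T ww t then T.dist y t else 0) hx'
    rw [if_pos hcx] at h1
    have : T.dist y x = T.dist x y := SimpleGraph.dist_comm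
    omega
  have hceq : c = z := by
    rcases hall c hc.1 with rfl | rfl | rfl
    · have := hc.2 z hcz; omega
    · have := hc.2 z hcz; omega
    · rfl
  subst hceq
  -- the central centroid has weight 0 and only two neighbors
  obtain ⟨hw0, hnb⟩ := bt_central hG hxy hxz hyz hAdjxz.symm hAdjyz.symm hcx hcy hcz
  refine ⟨hw0, ?_⟩
  obtain ⟨B, rfl⟩ := bt_eq_inr_of_weight_zero hw0
  -- x and y are cut vertices of B
  obtain ⟨u₁, hu₁B, rfl⟩ : ∃ u₁ : {v : V // IsCutVertex G v}, u₁.1 ∈ B.1 ∧ x = Sum.inl u₁ := by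
    rcases bt_adj_cases hAdjxz with ⟨v', B', hx', hz', hm⟩ | ⟨v', B', hx', hz', hm⟩
    · obtain rfl : B' = B := by injection hz' with h2; exact h2.symm
      exact ⟨v', hm, hx'⟩
    · exact absurd hz' (by simp)
  obtain ⟨u₂, hu₂B, rfl⟩ : ∃ u₂ : {v : V // IsCutVertex G v}, u₂.1 ∈ B.1 ∧ y = Sum.inl u₂ := by
    rcases bt_adj_cases hAdjyz with ⟨v', B', hy', hz', hm⟩ | ⟨v', B', hy', hz', hm⟩
    · obtain rfl : B' = B := by injection hz' with h2; exact h2.symm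
      exact ⟨v', hm, hy'⟩
    · exact absurd hz' (by simp)
  have hu12 : u₁.1 ≠ u₂.1 := by
    intro h
    exact hxy (by rw [Subtype.ext h])
  -- all vertices of B are cut vertices
  have hBcut : ∀ t ∈ B.1, IsCutVertex G t := by
    intro t ht
    by_contra hct
    have hmem : t ∈ B.1 \ {v | IsCutVertex G v} := ⟨ht, hct⟩
    have hempty : B.1 \ {v | IsCutVertex G v} = ∅ :=
      (Set.ncard_eq_zero (Set.toFinite _)).mp hw0
    rw [hempty] at hmem
    exact hmem
  have hBeq : B.1 = {u₁.1, u₂.1} := by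
    apply Set.eq_of_subset_of_subset
    · intro t ht
      have hcut := hBcut t ht
      have hadj : (blockTree G).Adj (Sum.inr B) (Sum.inl (⟨t, hcut⟩ :
          {v : V // IsCutVertex G v})) := (bt_adj_inl_inr ht).symm
      have ht' : t = u₁.1 ∨ t = u₂.1 := by
        rcases hnb _ hadj with h | h
        · left
          have h2 : (⟨t, hcut⟩ : {v : V // IsCutVertex G v}) = u₁ := by
            injection h
          exact congrArg Subtype.val h2
        · right
          have h2 : (⟨t, hcut⟩ : {v : V // IsCutVertex G v}) = u₂ := by
            injection h
          exact congrArg Subtype.val h2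
      rcases ht' with rfl | rfl <;> simp
    · rintro t (rfl | rfl)
      · exact hu₁B
      · exact hu₂B
  have hadjG : G.Adj u₁.1 u₂.1 := by
    have hre := B.2.1.2.1 ⟨u₁.1, hu₁B⟩ ⟨u₂.1, hu₂B⟩
    have hinr : InR G B.1 u₁.1 u₂.1 := InR_of_reach_induce hre
    rw [hBeq] at hinr
    exact adj_of_InR_pair hu12 hinr
  exact ⟨B, rfl, u₁.1, u₂.1, hu12, hBeq, hadjG⟩

end Main
/-- If the weighted block tree of a connected graph G has exactly three centroids, then
its central centroid is a block vertex of weight 0 whose block is a K2 (an edge of G). -/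
theorem stmt_13 {V : Type*} [Fintype V] (G : SimpleGraph V) [Fintype (BTVert G)]
    (hG : G.Connected)
    (h3 : {x : BTVert G | IsCentroid (blockTree G) (btWeight G) x}.ncard = 3)
    (c : BTVert G) (hc : IsCentralCentroid (blockTree G) (btWeight G) c) :
    btWeight G c = 0 ∧
    ∃ B : {B : Set V // IsBlock G B}, c = Sum.inr B ∧
      ∃ a b : V, a ≠ b ∧ B.1 = {a, b} ∧ G.Adj a b := by
  rw [Set.ncard_eq_three] at h3
  obtain ⟨p, q, r, hpq, hpr, hqr, hS⟩ := h3
  have hcp : IsCentroid (blockTree G) (btWeight G) p := by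
    have : p ∈ {x : BTVert G | IsCentroid (blockTree G) (btWeight G) x} := by
      rw [hS]; simp
    exact this
  have hcq : IsCentroid (blockTree G) (btWeight G) q := by
    have : q ∈ {x : BTVert G | IsCentroid (blockTree G) (btWeight G) x} := by
      rw [hS]; simp
    exact this
  have hcr : IsCentroid (blockTree G) (btWeight G) r := by
    have : r ∈ {x : BTVert G | IsCentroid (blockTree G) (btWeight G) x} := by
      rw [hS]; simp
    exact this
  have hall : ∀ m, IsCentroid (blockTree G) (btWeight G) m → m = p ∨ m = q ∨ m = r := by
    intro m hm
    have : m ∈ {x : BTVert G | IsCentroid (blockTree G) (btWeight G) x} := hm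
    rw [hS] at this
    simpa using this
  have M : ∀ x y z : BTVert G, IsCentroid (blockTree G) (btWeight G) x →
      IsCentroid (blockTree G) (btWeight G) y → IsCentroid (blockTree G) (btWeight G) z →
      x ≠ y → x ≠ z → y ≠ z →
      (∀ m, IsCentroid (blockTree G) (btWeight G) m → m = x ∨ m = y ∨ m = z) →
      ¬ (blockTree G).Adj x y →
      btWeight G c = 0 ∧ ∃ B : {B : Set V // IsBlock G B}, c = Sum.inr B ∧
        ∃ a b : V, a ≠ b ∧ B.1 = {a, b} ∧ G.Adj a b :=
    fun x y z hx hy hz h1 h2 h3 hall' hnadj =>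
      bt_main hG hx hy hz h1 h2 h3 hall' hnadj hc
  have hallpqr := hall
  rcases p with vp | Bp <;> rcases q with vq | Bq <;> rcases r with vr | Br
  · exact M _ _ _ hcp hcq hcr hpq hpr hqr hall (bt_not_adj_inl_inl _ _)
  · exact M _ _ _ hcp hcq hcr hpq hpr hqr hall (bt_not_adj_inl_inl _ _)
  · exact M _ _ _ hcp hcr hcq hpr hpq hqr.symm
      (fun m hm => by rcases hall m hm with h | h | h <;> tauto) (bt_not_adj_inl_inl _ _)
  · exact M _ _ _ hcq hcr hcp hqr hpq.symm hpr.symm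
      (fun m hm => by rcases hall m hm with h | h | h <;> tauto) (bt_not_adj_inr_inr _ _)
  · exact M _ _ _ hcq hcr hcp hqr hpq.symm hpr.symm
      (fun m hm => by rcases hall m hm with h | h | h <;> tauto) (bt_not_adj_inl_inl _ _)
  · exact M _ _ _ hcp hcr hcq hpr hpq hqr.symm
      (fun m hm => by rcases hall m hm with h | h | h <;> tauto) (bt_not_adj_inr_inr _ _)
  · exact M _ _ _ hcp hcq hcr hpq hpr hqr hall (bt_not_adj_inr_inr _ _)
  · exact M _ _ _ hcp hcq hcr hpq hpr hqr hall (bt_not_adj_inr_inr _ _)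
end

section
/- Every weighted tree (T,w) with non-negative integer weights and positive total weight can be transformed into a canonical weighted tree of the same total weight by contracting each maximal connected subgraph of zero-weight vertices to a single zero-weight vertex and then deleting all zero-weight leaves, and the resulting canonical weighted tree is unique. -/
open SimpleGraph
open scoped Classical

/-- A weighted tree is canonical if the zero-weight vertices form an independent set
and every leaf has positive weight. -/
def Canonical {V : Type*} (T : SimpleGraph V) (w : V → ℕ) : Prop :=
  (∀ u v, T.Adj u v → ¬(w u = 0 ∧ w v = 0)) ∧ (∀ v, IsLeaf T v → 0 < w v)

/-- v and u are joined by a walk all of whose vertices have weight zero. -/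
def ZeroReach {V : Type*} (T : SimpleGraph V) (w : V → ℕ) (v u : V) : Prop :=
  ∃ p : T.Walk v u, ∀ x ∈ p.support, w x = 0

/-- (T', w') is obtained from (T, w) by contracting each maximal connected subgraph of
zero-weight vertices to a single zero-weight vertex and deleting some zero-weight
vertices, as recorded by the map φ (φ v = none means v was deleted; vertices with the
same image some v' form one contracted fiber). -/
def Contraction {V V' : Type*} [Fintype V] (T : SimpleGraph V) (w : V → ℕ)
    (T' : SimpleGraph V') (w' : V' → ℕ) (φ : V → Option V') : Prop :=
  (∀ v', ∃ v, φ v = some v') ∧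
  (∀ v, φ v = none → w v = 0) ∧
  (∀ v u, v ≠ u → φ v = φ u → φ v ≠ none → w v = 0 ∧ w u = 0) ∧
  (∀ v u, ZeroReach T w v u → φ v = φ u) ∧
  (∀ v u, v ≠ u → φ v = φ u → φ v ≠ none → ZeroReach T w v u) ∧
  (∀ v' : V', w' v' = ∑ v : V, if φ v = some v' then w v else 0) ∧
  (∀ a b : V', a ≠ b → (T'.Adj a b ↔ ∃ x y, T.Adj x y ∧ φ x = some a ∧ φ y = some b))

namespace S19
variable {V : Type*} {T : SimpleGraph V} {w : V → ℕ}

lemma zr_symm {v u} (h : ZeroReach T w v u) : ZeroReach T w u v := by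
  obtain ⟨p, hp⟩ := h
  exact ⟨p.reverse, by simpa [SimpleGraph.Walk.support_reverse] using hp⟩

lemma zr_trans {v u x} (h : ZeroReach T w v u) (h' : ZeroReach T w u x) :
    ZeroReach T w v x := by
  obtain ⟨p, hp⟩ := h; obtain ⟨q, hq⟩ := h'
  refine ⟨p.append q, fun m hm => ?_⟩
  rcases (SimpleGraph.Walk.mem_support_append_iff p q).1 hm with h | h
  exacts [hp m h, hq m h]

lemma zr_zero_left {v u} (h : ZeroReach T w v u) : w v = 0 := by
  obtain ⟨p, hp⟩ := h; exact hp v p.start_mem_support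

lemma zr_zero_right {v u} (h : ZeroReach T w v u) : w u = 0 :=
  zr_zero_left (zr_symm h)

lemma zr_self {v} (h : w v = 0) : ZeroReach T w v v :=
  ⟨SimpleGraph.Walk.nil, by simp [h]⟩

lemma zr_adj {v u} (h : T.Adj v u) (hv : w v = 0) (hu : w u = 0) : ZeroReach T w v u :=
  ⟨h.toWalk, by simp [hv, hu]⟩

/-- the setoid whose classes are: singletons of positive vertices, and zero components -/
def S (T : SimpleGraph V) (w : V → ℕ) : Setoid V :=
  ⟨fun v u => v = u ∨ ZeroReach T w v u,
   fun _ => Or.inl rfl,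
   by rintro a b (rfl | h); exacts [Or.inl rfl, Or.inr (zr_symm h)],
   by rintro a b c (rfl | h) (rfl | h')
      exacts [Or.inl rfl, Or.inr h', Or.inr h, Or.inr (zr_trans h h')]⟩

lemma zr_of_rel {v u} (h : (S T w).r v u) (hv : w v = 0) : ZeroReach T w v u := by
  rcases h with rfl | h; exacts [zr_self hv, h]

lemma rel_zero {v u} (h : (S T w).r v u) (hv : w v = 0) : w u = 0 := by
  rcases h with rfl | h; exacts [hv, zr_zero_right h]

/-- positive neighbors of the zero-class of v -/
def P (T : SimpleGraph V) (w : V → ℕ) (v : V) : Set V :=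
  {p | 0 < w p ∧ ∃ z, (S T w).r z v ∧ T.Adj p z}

lemma P_congr {v u} (h : (S T w).r v u) : P T w v = P T w u := by
  ext p
  simp only [P, Set.mem_setOf_eq]
  constructor <;> rintro ⟨hp, z, hz, ha⟩
  · exact ⟨hp, z, (S T w).trans hz h, ha⟩
  · exact ⟨hp, z, (S T w).trans hz ((S T w).symm h), ha⟩

/-- kept vertices: positive weight, or zero class with at least two positive neighbors -/
def kept (T : SimpleGraph V) (w : V → ℕ) (v : V) : Prop :=
  0 < w v ∨ 2 ≤ (P T w v).ncard

lemma kept_congr {v u} (h : (S T w).r v u) (hv : w v = 0) (hu : w u = 0) :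
    kept T w v ↔ kept T w u := by
  simp [kept, hv, hu, P_congr h]

lemma kept_of_pos {v} (h : 0 < w v) : kept T w v := Or.inl h

lemma zero_of_not_kept {v} (h : ¬ kept T w v) : w v = 0 := by
  by_contra h'; exact h (Or.inl (Nat.pos_of_ne_zero h'))

variable (T w) in
def V0 : Type _ := {c : Quotient (S T w) // ∃ v, kept T w v ∧ Quotient.mk (S T w) v = c}

instance [Finite V] : Finite (V0 T w) := by unfold V0; infer_instance
noncomputable instance [Finite V] : Fintype (V0 T w) := Fintype.ofFinite _

variable (T w) in
noncomputable def phi0 (v : V) : Option (V0 T w) :=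
  if h : kept T w v then some ⟨Quotient.mk _ v, v, h, rfl⟩ else none

variable (T w) in
def T0 : SimpleGraph (V0 T w) where
  Adj a b := a ≠ b ∧ ∃ x y, T.Adj x y ∧ phi0 T w x = some a ∧ phi0 T w y = some b
  symm := ⟨by rintro a b ⟨hne, x, y, h1, h2, h3⟩; exact ⟨hne.symm, y, x, h1.symm, h3, h2⟩⟩
  loopless := ⟨by rintro a ⟨hne, -⟩; exact hne rfl⟩

variable (T w) in
noncomputable def w0 [Fintype V] (c : V0 T w) : ℕ :=
  ∑ v : V, if phi0 T w v = some c then w v else 0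

lemma phi0_eq_some {v : V} (h : kept T w v) :
    phi0 T w v = some ⟨Quotient.mk _ v, v, h, rfl⟩ := dif_pos h

lemma phi0_eq_none {v : V} (h : ¬ kept T w v) : phi0 T w v = none := dif_neg h

lemma phi0_some_iff {v : V} {a : V0 T w} :
    phi0 T w v = some a ↔ kept T w v ∧ Quotient.mk (S T w) v = a.1 := by
  unfold phi0
  split
  · next h =>
    refine Option.some_inj.trans ?_
    constructor
    · rintro rfl; exact ⟨h, rfl⟩
    · rintro ⟨-, h2⟩; exact Subtype.ext h2
  · next h => simp [h]

lemma phi0_ne_none_iff {v : V} : phi0 T w v ≠ none ↔ kept T w v := by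
  unfold phi0; split <;> simp_all

lemma rel_of_phi0_eq {v u : V} (h : phi0 T w v = phi0 T w u) (hv : kept T w v) :
    (S T w).r v u := by
  rw [phi0_eq_some hv] at h
  have := (phi0_some_iff.1 h.symm).2
  exact Quotient.exact this.symm

lemma phi0_eq_of_rel {v u : V} (h : (S T w).r v u) : phi0 T w v = phi0 T w u := by
  by_cases hv : 0 < w v
  · rcases h with rfl | h
    · rfl
    · exact absurd (zr_zero_left h) (by omega)
  · have hv0 : w v = 0 := by omega
    have hu0 : w u = 0 := rel_zero h hv0
    by_cases hk : kept T w v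
    · have hku : kept T w u := (kept_congr h hv0 hu0).1 hk
      rw [phi0_eq_some hk, phi0_eq_some hku]
      exact congrArg _ (Subtype.ext (Quotient.sound h))
    · rw [phi0_eq_none hk, phi0_eq_none (fun hku => hk ((kept_congr h hv0 hu0).2 hku))]

variable (T w) in
lemma contraction0 [Fintype V] : Contraction T w (T0 T w) (w0 T w) (phi0 T w) := by
  refine ⟨?_, ?_, ?_, ?_, ?_, fun _ => rfl, ?_⟩
  · rintro ⟨c, v, hv, rfl⟩
    exact ⟨v, phi0_eq_some hv⟩
  · intro v hv
    exact zero_of_not_kept (fun hk => by rw [phi0_eq_some hk] at hv; exact Option.some_ne_none _ hv)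
  · intro v u hne heq hnn
    have hk : kept T w v := phi0_ne_none_iff.1 hnn
    have hz := (rel_of_phi0_eq heq hk).resolve_left hne
    exact ⟨zr_zero_left hz, zr_zero_right hz⟩
  · intro v u h
    exact phi0_eq_of_rel (Or.inr h)
  · intro v u hne heq hnn
    exact (rel_of_phi0_eq heq (phi0_ne_none_iff.1 hnn)).resolve_left hne
  · intro a b hab
    constructor
    · rintro ⟨-, hx⟩; exact hx
    · intro hx; exact ⟨hab, hx⟩


lemma mem_P {p v z : V} (hp : 0 < w p) (hz : (S T w).r z v) (ha : T.Adj p z) :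
    p ∈ P T w v := ⟨hp, z, hz, ha⟩

lemma not_two_le_of_not_kept {v} (h : ¬ kept T w v) : (P T w v).ncard ≤ 1 := by
  by_contra h'
  exact h (Or.inr (by omega))

/-- Any walk from inside the zero-class of `v` to outside it passes a positive
class-neighbor. -/
lemma exit_mem {v x c : V} (hv : w v = 0) (hx : ¬ (S T w).r x v) (q : T.Walk c x)
    (hc : (S T w).r c v) : ∃ d ∈ q.support, d ∈ P T w v := by
  induction q with
  | nil => exact absurd hc hx
  | @cons c m x h q ih =>
    by_cases hm : (S T w).r m v
    · obtain ⟨d, hd1, hd2⟩ := ih hx hm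
      exact ⟨d, by simp [Walk.support_cons, hd1], hd2⟩
    · have hc0 : w c = 0 := rel_zero ((S T w).symm hc) hv
      have hmpos : 0 < w m := by
        rcases Nat.eq_zero_or_pos (w m) with h0 | h0
        · exact absurd ((S T w).trans ((S T w).symm
            (show (S T w).r c m from Or.inr (zr_adj h hc0 h0))) hc) hm
        · exact h0
      exact ⟨m, by simp [Walk.support_cons, Walk.start_mem_support],
        mem_P hmpos hc h.symm⟩

lemma not_rel_of_kept {x c} (hx : kept T w x) (hc : ¬ kept T w c) : ¬ (S T w).r x c := by
  intro h
  rcases Nat.eq_zero_or_pos (w x) with h0 | h0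
  · exact hc ((kept_congr h h0 (rel_zero h h0)).1 hx)
  · rcases h with rfl | hz
    · exact hc hx
    · obtain ⟨p, hp⟩ := hz
      have := hp x p.start_mem_support
      omega

/-- All vertices of a path between kept vertices are kept. -/
lemma path_kept [Fintype V] {x y : V} {p : T.Walk x y} (hp : p.IsPath)
    (hx : kept T w x) (hy : kept T w y) : ∀ c ∈ p.support, kept T w c := by
  intro c hc
  by_contra hck
  have hrx : ¬ (S T w).r x c := not_rel_of_kept hx hck
  have hry : ¬ (S T w).r y c := not_rel_of_kept hy hck
  have hc0 : w c = 0 := zero_of_not_kept hck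
  obtain ⟨d1, hd1s, hd1P⟩ :=
    exit_mem hc0 hrx (p.takeUntil c hc).reverse ((S T w).refl c)
  obtain ⟨d2, hd2s, hd2P⟩ := exit_mem hc0 hry (p.dropUntil c hc) ((S T w).refl c)
  have hd : d1 = d2 :=
    (Set.ncard_le_one (Set.toFinite _)).1 (not_two_le_of_not_kept hck) d1 hd1P d2 hd2P
  rw [Walk.support_reverse, List.mem_reverse] at hd1s
  have hnodup : ((p.takeUntil c hc).support ++ (p.dropUntil c hc).support.tail).Nodup := by
    have := hp.support_nodup
    rwa [← Walk.take_spec p hc, Walk.support_append] at this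
  have hd2c : d2 ≠ c := by
    intro h
    rw [h] at hd2P
    have := hd2P.1
    omega
  have hd2tail : d2 ∈ (p.dropUntil c hc).support.tail := by
    rw [Walk.support_eq_cons (p.dropUntil c hc), List.mem_cons] at hd2s
    exact hd2s.resolve_left hd2c
  exact List.disjoint_of_nodup_append hnodup (hd ▸ hd1s) hd2tail


section Tree0
variable [Fintype V]

lemma exists_pos (hw : 0 < ∑ v : V, w v) : ∃ v, 0 < w v := by
  by_contra h
  push_neg at h
  simp only [Nat.le_zero] at h
  simp [Finset.sum_congr rfl (fun v _ => h v)] at hw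

lemma walk_push {x y : V} (p : T.Walk x y) (hall : ∀ c ∈ p.support, kept T w c) :
    ∀ a b, phi0 T w x = some a → phi0 T w y = some b → (T0 T w).Reachable a b := by
  induction p with
  | nil =>
    intro a b ha hb
    rw [ha] at hb
    exact (Option.some_inj.1 hb) ▸ Reachable.refl a
  | @cons x m y h p ih =>
    intro a b ha hb
    have hmk : kept T w m := hall m (by simp [Walk.support_cons, Walk.start_mem_support])
    have hm : phi0 T w m = some ⟨Quotient.mk _ m, m, hmk, rfl⟩ := phi0_eq_some hmk
    have hrest : ∀ c ∈ p.support, kept T w c := fun c hcm =>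
      hall c (by simp [Walk.support_cons, hcm])
    by_cases he : phi0 T w x = phi0 T w m
    · exact (Option.some_inj.1 (hm ▸ he ▸ ha : some _ = some _)) ▸ ih hrest _ b hm hb
    · have hadj : (T0 T w).Adj a ⟨Quotient.mk _ m, m, hmk, rfl⟩ := by
        refine ⟨?_, x, m, h, ha, hm⟩
        intro hh
        rw [hh] at ha
        exact he (ha.trans hm.symm)
      exact (hadj.reachable).trans (ih hrest _ b hm hb)

lemma connected0 (hT : T.IsTree) (hw : 0 < ∑ v : V, w v) : (T0 T w).Connected := by
  have hne : Nonempty (V0 T w) := by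
    obtain ⟨v, hv⟩ := exists_pos hw
    exact ⟨⟨Quotient.mk _ v, v, kept_of_pos hv, rfl⟩⟩
  haveI := hne
  refine Connected.mk fun a b => ?_
  obtain ⟨va, hka, hqa⟩ := a.2
  obtain ⟨vb, hkb, hqb⟩ := b.2
  obtain ⟨p⟩ := hT.isConnected va vb
  have hall := path_kept p.toPath.2 hka hkb
  exact walk_push (p.toPath : T.Walk va vb) hall a b
    (phi0_some_iff.2 ⟨hka, hqa⟩) (phi0_some_iff.2 ⟨hkb, hqb⟩)

lemma acyclic0 (hT : T.IsTree) : (T0 T w).IsAcyclic := by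
  rw [isAcyclic_iff_forall_edge_isBridge]
  intro e he
  induction e with
  | _ a b =>
    rw [mem_edgeSet] at he
    obtain ⟨hab, x, y, hxy, hx, hy⟩ := he
    rw [isBridge_iff]
    -- xy is a bridge of T
    have hbr : ¬ (T \ fromEdgeSet {s(x, y)}).Reachable x y := by
      have := (isAcyclic_iff_forall_edge_isBridge.1 hT.IsAcyclic)
        (T.mem_edgeSet.2 hxy)
      exact isBridge_iff.1 this
    set Tc := T \ fromEdgeSet {s(x, y)} with hTc
    -- fibers lie on one side
    have fib_side : ∀ u v : V, phi0 T w u = phi0 T w v → phi0 T w u ≠ none →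
        (Tc.Reachable x u ↔ Tc.Reachable x v) := by
      intro u v huv hnn
      by_cases h' : u = v
      · rw [h']
      · have hz := (rel_of_phi0_eq huv (phi0_ne_none_iff.1 hnn)).resolve_left h'
        obtain ⟨q, hq⟩ := hz
        have hqc : ∀ e ∈ q.edges, e ∈ Tc.edgeSet := by
          intro e heq
          rw [hTc, edgeSet_sdiff]
          refine ⟨q.edges_subset_edgeSet heq, ?_⟩
          intro hmem
          rw [edgeSet_fromEdgeSet, Set.mem_diff, Set.mem_singleton_iff] at hmem
          have hex : w x = 0 := by
            have := q.fst_mem_support_of_mem_edges (by rwa [hmem.1] at heq)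
            exact hq x this
          have hey : w y = 0 := by
            have := q.snd_mem_support_of_mem_edges (by rwa [hmem.1] at heq)
            exact hq y this
          have : phi0 T w x = phi0 T w y := phi0_eq_of_rel (Or.inr (zr_adj hxy hex hey))
          rw [hx, hy] at this
          exact hab (Option.some_inj.1 this)
        exact ⟨fun hr => hr.trans ⟨q.transfer Tc hqc⟩,
          fun hr => hr.trans ⟨(q.transfer Tc hqc).reverse⟩⟩
    -- side of a class
    intro hreach
    obtain ⟨W⟩ := hreach
    -- prove side invariance along the walk
    have key : ∀ {c d : V0 T w} (q : ((T0 T w) \ fromEdgeSet {s(a, b)}).Walk c d)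
        (u v : V), phi0 T w u = some c → phi0 T w v = some d →
        (Tc.Reachable x u ↔ Tc.Reachable x v) := by
      intro c d q
      induction q with
      | nil =>
        intro u v hu hv
        exact fib_side u v (by rw [hu, hv]) (by simp [hu])
      | @cons c m d hadj q ih =>
        intro u v hu hv
        have h1 : (T0 T w).Adj c m ∧ s(c, m) ≠ s(a, b) := by
          simp only [sdiff_adj, fromEdgeSet_adj] at hadj
          exact ⟨hadj.1, fun hh => hadj.2 ⟨Set.mem_singleton_iff.mpr hh, hadj.1.ne⟩⟩
        obtain ⟨⟨hcm, x', y', hxy', hx', hy'⟩, hne⟩ := h1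
        have hxy'ne : s(x', y') ≠ s(x, y) := by
          intro hh
          apply hne
          rw [Sym2.eq_iff] at hh ⊢
          rcases hh with ⟨rfl, rfl⟩ | ⟨rfl, rfl⟩
          · rw [hx] at hx'; rw [hy] at hy'
            exact Or.inl ⟨(Option.some_inj.1 hx').symm, (Option.some_inj.1 hy').symm⟩
          · rw [hy] at hx'; rw [hx] at hy'
            exact Or.inr ⟨(Option.some_inj.1 hx').symm, (Option.some_inj.1 hy').symm⟩
        have hedge : Tc.Adj x' y' := by
          rw [hTc, sdiff_adj]
          refine ⟨hxy', ?_⟩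
          rw [fromEdgeSet_adj]
          rintro ⟨hm, -⟩
          exact hxy'ne (Set.mem_singleton_iff.1 hm)
        have s1 : Tc.Reachable x u ↔ Tc.Reachable x x' :=
          fib_side u x' (by rw [hu, hx']) (by simp [hu])
        have s2 : Tc.Reachable x x' ↔ Tc.Reachable x y' :=
          ⟨fun h => h.trans hedge.reachable, fun h => h.trans hedge.symm.reachable⟩
        exact s1.trans (s2.trans (ih y' v hy' hv))
    have := key W x y hx hy
    exact hbr (this.1 (Reachable.refl x))

lemma w0_eq_zero_iff {c : V0 T w} :
    w0 T w c = 0 ↔ ∀ v, phi0 T w v = some c → w v = 0 := by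
  rw [w0, Finset.sum_eq_zero_iff]
  constructor
  · intro h v hv
    have := h v (Finset.mem_univ v)
    rwa [if_pos hv] at this
  · intro h v _
    split
    · next hv => exact h v hv
    · rfl

lemma canonical0 (hT : T.IsTree) : Canonical (T0 T w) (w0 T w) := by
  constructor
  · rintro a b ⟨hab, x, y, hxy, hx, hy⟩ ⟨ha, hb⟩
    have hx0 : w x = 0 := w0_eq_zero_iff.1 ha x hx
    have hy0 : w y = 0 := w0_eq_zero_iff.1 hb y hy
    have := phi0_eq_of_rel (show (S T w).r x y from Or.inr (zr_adj hxy hx0 hy0))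
    rw [hx, hy] at this
    exact hab (Option.some_inj.1 this)
  · intro c hleaf
    by_contra hpos
    have hc0 : w0 T w c = 0 := by omega
    obtain ⟨va, hka, hqa⟩ := c.2
    have hva : phi0 T w va = some c := phi0_some_iff.2 ⟨hka, hqa⟩
    have hva0 : w va = 0 := w0_eq_zero_iff.1 hc0 va hva
    have h2 : 2 ≤ (P T w va).ncard := by
      rcases hka with h | h
      · omega
      · exact h
    obtain ⟨p, q, hp, hq, hpq⟩ :=
      (Set.one_lt_ncard_iff (Set.toFinite _)).1 (show 1 < (P T w va).ncard by omega)
    obtain ⟨hppos, zp, hzp, hazp⟩ := hp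
    obtain ⟨hqpos, zq, hzq, hazq⟩ := hq
    -- images of p and q are distinct neighbors of c in T0
    have himg : ∀ r zr, 0 < w r → (S T w).r zr va → T.Adj r zr →
        ∃ ar : V0 T w, phi0 T w r = some ar ∧ ar ≠ c ∧ (T0 T w).Adj c ar := by
      intro r zr hrpos hzr hazr
      have hkr : kept T w r := kept_of_pos hrpos
      refine ⟨⟨Quotient.mk _ r, r, hkr, rfl⟩, phi0_eq_some hkr, ?_, ?_⟩
      · intro hh
        have : w r = 0 := w0_eq_zero_iff.1 hc0 r (hh ▸ phi0_eq_some hkr)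
        omega
      · have hzrc : phi0 T w zr = some c := by
          rw [phi0_eq_of_rel hzr]; exact hva
        refine ⟨?_, zr, r, hazr.symm, hzrc, phi0_eq_some hkr⟩
        intro hh
        have : w r = 0 := w0_eq_zero_iff.1 hc0 r (hh ▸ phi0_eq_some hkr)
        omega
    obtain ⟨ap, hpap, hapc, hcap⟩ := himg p zp hppos hzp hazp
    obtain ⟨aq, hqaq, haqc, hcaq⟩ := himg q zq hqpos hzq hazq
    have hapaq : ap ≠ aq := by
      intro hh
      have : (S T w).r p q := rel_of_phi0_eq (by rw [hpap, hh, hqaq]) (kept_of_pos hppos)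
      rcases this with rfl | hz
      · exact hpq rfl
      · obtain ⟨pk, hpk⟩ := hz
        have := hpk p pk.start_mem_support
        omega
    have : 1 < ((T0 T w).neighborSet c).ncard :=
      (Set.one_lt_ncard_iff (Set.toFinite _)).2 ⟨ap, aq, hcap, hcaq, hapaq⟩
    rw [IsLeaf] at hleaf
    omega

lemma sum0 : ∑ᶠ c, w0 T w c = ∑ v, w v := by
  rw [finsum_eq_sum_of_fintype]
  have : ∀ c : V0 T w, w0 T w c = ∑ v : V, if phi0 T w v = some c then w v else 0 :=
    fun _ => rfl
  rw [Finset.sum_congr rfl (fun c _ => this c), Finset.sum_comm]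
  refine Finset.sum_congr rfl fun v _ => ?_
  cases hv : phi0 T w v with
  | none =>
    have : w v = 0 := zero_of_not_kept (fun hk => by
      rw [phi0_eq_some hk] at hv; exact Option.some_ne_none _ hv)
    simp [hv, this]
  | some c =>
    simp [hv, Finset.sum_ite_eq]

end Tree0

section Uniq
variable [Fintype V] {V₂ : Type*} {T₂ : SimpleGraph V₂} {w₂ : V₂ → ℕ} {φ : V → Option V₂}

lemma conn_walk (hc : Contraction T w T₂ w₂ φ) {x u : V} (h : φ x = φ u)
    (hnn : φ x ≠ none) : ∃ q : T.Walk x u, ∀ m ∈ q.support, φ m = φ x := by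
  by_cases hne : x = u
  · subst hne
    exact ⟨Walk.nil, by simp⟩
  · obtain ⟨q, hq⟩ := hc.2.2.2.2.1 x u hne h hnn
    refine ⟨q, fun m hm => ?_⟩
    exact (hc.2.2.2.1 x m ⟨q.takeUntil m hm,
      fun z hz => hq z (q.support_takeUntil_subset hm hz)⟩).symm

lemma lift_walk (hc : Contraction T w T₂ w₂ φ) {a b : V₂} (W : T₂.Walk a b) :
    ∀ {x y : V}, φ x = some a → φ y = some b →
      ∃ q : T.Walk x y, ∀ m ∈ q.support, φ m ≠ none := by
  induction W with
  | nil =>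
    intro x y hx hy
    obtain ⟨q, hq⟩ := conn_walk hc (hx.trans hy.symm) (by simp [hx])
    exact ⟨q, fun m hm => by simp [hq m hm, hx]⟩
  | @cons a m b hadj W ih =>
    intro x y hx hy
    obtain ⟨x₁, y₁, hxy₁, hx₁, hy₁⟩ := (hc.2.2.2.2.2.2 a m hadj.ne).1 hadj
    obtain ⟨q₁, hq₁⟩ := conn_walk hc (hx.trans hx₁.symm) (by simp [hx])
    obtain ⟨q₂, hq₂⟩ := ih hy₁ hy
    refine ⟨q₁.append (Walk.cons hxy₁ q₂), fun z hz => ?_⟩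
    rcases (Walk.mem_support_append_iff _ _).1 hz with h | h
    · simp [hq₁ z h, hx]
    · rw [Walk.support_cons, List.mem_cons] at h
      rcases h with rfl | h
      · simp [hx₁]
      · exact hq₂ z h

lemma kept_imp_some (hT : T.IsTree) (hc : Contraction T w T₂ w₂ φ)
    (ht₂ : T₂.IsTree) {v : V} (hk : kept T w v) : φ v ≠ none := by
  by_cases hpos : 0 < w v
  · intro hv
    have := hc.2.1 v hv
    omega
  · have hv0 : w v = 0 := by omega
    have h2 : 2 ≤ (P T w v).ncard := hk.resolve_left hpos
    intro hvnone
    obtain ⟨p, q, hp, hq, hpq⟩ :=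
      (Set.one_lt_ncard_iff (Set.toFinite _)).1 (show 1 < (P T w v).ncard by omega)
    obtain ⟨hppos, zp, hzp, hazp⟩ := hp
    obtain ⟨hqpos, zq, hzq, hazq⟩ := hq
    have hpnn : φ p ≠ none := fun h => by have := hc.2.1 p h; omega
    have hqnn : φ q ≠ none := fun h => by have := hc.2.1 q h; omega
    obtain ⟨ap, hap⟩ := Option.ne_none_iff_exists'.1 hpnn
    obtain ⟨aq, haq⟩ := Option.ne_none_iff_exists'.1 hqnn
    obtain ⟨W⟩ := ht₂.isConnected ap aq
    obtain ⟨W1, hW1⟩ := lift_walk hc W hap haq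
    -- zero walk inside the class
    have hzp0 : w zp = 0 := rel_zero ((S T w).symm hzp) hv0
    have hzq0 : w zq = 0 := rel_zero ((S T w).symm hzq) hv0
    obtain ⟨zw, hzw⟩ := zr_of_rel ((S T w).trans hzp ((S T w).symm hzq)) hzp0
    set zwP := zw.toPath with hzwP
    have hsub : ∀ m ∈ (zwP : T.Walk zp zq).support, w m = 0 :=
      fun m hm => hzw m (zw.support_toPath_subset hm)
    have hR' : (Walk.cons hazp ((zwP : T.Walk zp zq).concat hazq.symm)).IsPath := by
      rw [Walk.isPath_def, Walk.support_cons, Walk.support_concat]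
      rw [List.nodup_cons]
      constructor
      · intro hmem
        rw [List.mem_append, List.mem_singleton] at hmem
        rcases hmem with h | h
        · have := hsub p h; omega
        · exact hpq h

      · refine List.Nodup.append zwP.2.support_nodup (List.nodup_singleton q) ?_
        intro m hm hm'
        rw [List.mem_singleton] at hm'
        subst hm'
        have := hsub m hm
        omega
    have hpath := hT.IsAcyclic.path_unique W1.toPath ⟨_, hR'⟩
    have hzpmem : zp ∈ (W1.toPath : T.Walk p q).support := by
      rw [hpath]
      simp [Walk.support_cons, Walk.start_mem_support]
    have hzpnn : φ zp ≠ none := hW1 zp (W1.support_toPath_subset hzpmem)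
    have : φ zp = φ v := hc.2.2.2.1 zp v (zr_of_rel hzp hzp0)
    rw [this, hvnone] at hzpnn
    exact hzpnn rfl

lemma notkept_imp_none (hc : Contraction T w T₂ w₂ φ) (ht₂ : T₂.IsTree)
    (hcan₂ : Canonical T₂ w₂) (hw : 0 < ∑ v : V, w v) {v : V} (hk : ¬ kept T w v) :
    φ v = none := by
  have hv0 : w v = 0 := zero_of_not_kept hk
  have hP1 : (P T w v).ncard ≤ 1 := not_two_le_of_not_kept hk
  by_contra hnn
  obtain ⟨a, ha⟩ := Option.ne_none_iff_exists'.1 hnn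
  have fiber_zero : ∀ u, φ u = some a → w u = 0 ∧ (S T w).r u v := by
    intro u hu
    by_cases h' : u = v
    · subst h'; exact ⟨hv0, (S T w).refl u⟩
    · have hz := hc.2.2.2.2.1 u v h' (hu.trans ha.symm) (by simp [hu])
      exact ⟨zr_zero_left hz, Or.inr hz⟩
  have hwa : w₂ a = 0 := by
    rw [hc.2.2.2.2.2.1 a]
    refine Finset.sum_eq_zero fun u _ => ?_
    split
    · next hu => exact (fiber_zero u hu).1
    · rfl
  -- any neighbor of a comes from a positive class-neighbor of v
  have hnbr : ∀ b, T₂.Adj a b → ∃ yb, yb ∈ P T w v ∧ φ yb = some b := by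
    intro b hb
    obtain ⟨x, y, hxy, hx, hy⟩ := (hc.2.2.2.2.2.2 a b hb.ne).1 hb
    obtain ⟨hx0, hxr⟩ := fiber_zero x hx
    have hypos : 0 < w y := by
      rcases Nat.eq_zero_or_pos (w y) with h0 | h0
      · exfalso
        have := hc.2.2.2.1 x y (zr_adj hxy hx0 h0)
        rw [hx, hy] at this
        exact hb.ne (Option.some_inj.1 this)
      · exact h0
    exact ⟨y, ⟨hypos, x, hxr, hxy.symm⟩, hy⟩
  have hsub : ∀ b₁ b₂, T₂.Adj a b₁ → T₂.Adj a b₂ → b₁ = b₂ := by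
    intro b₁ b₂ h1 h2
    obtain ⟨y1, hy1P, hy1⟩ := hnbr b₁ h1
    obtain ⟨y2, hy2P, hy2⟩ := hnbr b₂ h2
    have : y1 = y2 := (Set.ncard_le_one (Set.toFinite _)).1 hP1 y1 hy1P y2 hy2P
    rw [this, hy2] at hy1
    exact (Option.some_inj.1 hy1).symm
  have hnoadj : ∀ b, ¬ T₂.Adj a b := by
    intro b hb
    have hNS : T₂.neighborSet a = {b} := by
      ext c
      simp only [mem_neighborSet, Set.mem_singleton_iff]
      exact ⟨fun hc' => hsub c b hc' hb, fun hc' => hc' ▸ hb⟩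
    have hleaf : IsLeaf T₂ a := by
      rw [IsLeaf, hNS, Set.ncard_singleton]
    have := hcan₂.2 a hleaf
    omega
  -- but a must have a neighbor since there is a positive vertex elsewhere
  obtain ⟨u, hu⟩ := exists_pos hw
  have hunn : φ u ≠ none := fun h => by have := hc.2.1 u h; omega
  obtain ⟨b, hb⟩ := Option.ne_none_iff_exists'.1 hunn
  have hba : b ≠ a := by
    intro hh
    subst hh
    have := (fiber_zero u hb).1
    omega
  obtain ⟨W⟩ := ht₂.isConnected a b
  cases W with
  | nil => exact hba rfl
  | cons hadj _ => exact hnoadj _ hadj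

lemma none_iff_not_kept (hT : T.IsTree) (hw : 0 < ∑ v : V, w v)
    (hc : Contraction T w T₂ w₂ φ) (ht₂ : T₂.IsTree) (hcan₂ : Canonical T₂ w₂) :
    ∀ v, φ v = none ↔ ¬ kept T w v :=
  fun v => ⟨fun h hk => kept_imp_some hT hc ht₂ hk h,
    fun hk => notkept_imp_none hc ht₂ hcan₂ hw hk⟩


end Uniq

section Two
variable [Fintype V] {V₁ : Type*} {T₁ : SimpleGraph V₁} {w₁ : V₁ → ℕ} {φ₁ : V → Option V₁}
variable {V₂ : Type*} {T₂ : SimpleGraph V₂} {w₂ : V₂ → ℕ} {φ₂ : V → Option V₂}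

lemma key_two (hT : T.IsTree) (hw : 0 < ∑ v : V, w v)
    (hc₁ : Contraction T w T₁ w₁ φ₁) (ht₁ : T₁.IsTree) (hcan₁ : Canonical T₁ w₁)
    (hc₂ : Contraction T w T₂ w₂ φ₂) (ht₂ : T₂.IsTree) (hcan₂ : Canonical T₂ w₂) :
    ∀ v u, φ₁ v = φ₁ u → φ₂ v = φ₂ u := by
  intro v u h
  by_cases hne : v = u
  · rw [hne]
  · cases hv : φ₁ v with
    | none =>
      rw [hv] at h
      have h1 := (none_iff_not_kept hT hw hc₁ ht₁ hcan₁ v).1 hv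
      have h2 := (none_iff_not_kept hT hw hc₁ ht₁ hcan₁ u).1 h.symm
      rw [(none_iff_not_kept hT hw hc₂ ht₂ hcan₂ v).2 h1,
        (none_iff_not_kept hT hw hc₂ ht₂ hcan₂ u).2 h2]
    | some a =>
      have hz := hc₁.2.2.2.2.1 v u hne h (by simp [hv])
      exact hc₂.2.2.2.1 v u hz

lemma equiv_of_two (hT : T.IsTree) (hw : 0 < ∑ v : V, w v)
    (hc₁ : Contraction T w T₁ w₁ φ₁) (ht₁ : T₁.IsTree) (hcan₁ : Canonical T₁ w₁)
    (hc₂ : Contraction T w T₂ w₂ φ₂) (ht₂ : T₂.IsTree) (hcan₂ : Canonical T₂ w₂) :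
    ∃ e : V₁ ≃ V₂, (∀ x y, T₁.Adj x y ↔ T₂.Adj (e x) (e y)) ∧
      ∀ x, w₂ (e x) = w₁ x := by
  have key12 := key_two hT hw hc₁ ht₁ hcan₁ hc₂ ht₂ hcan₂
  have key21 := key_two hT hw hc₂ ht₂ hcan₂ hc₁ ht₁ hcan₁
  have hψ : ∀ a : V₁, ∃ b : V₂, ∀ v, φ₁ v = some a → φ₂ v = some b := by
    intro a
    obtain ⟨v₀, hv₀⟩ := hc₁.1 a
    have hk : kept T w v₀ := by
      by_contra hk
      rw [(none_iff_not_kept hT hw hc₁ ht₁ hcan₁ v₀).2 hk] at hv₀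
      exact Option.some_ne_none _ hv₀.symm
    have h2 : φ₂ v₀ ≠ none := fun h =>
      (none_iff_not_kept hT hw hc₂ ht₂ hcan₂ v₀).1 h hk
    obtain ⟨b, hb⟩ := Option.ne_none_iff_exists'.1 h2
    exact ⟨b, fun v hv => (key12 v v₀ (hv.trans hv₀.symm)).trans hb⟩
  have hψ' : ∀ b : V₂, ∃ a : V₁, ∀ v, φ₂ v = some b → φ₁ v = some a := by
    intro b
    obtain ⟨v₀, hv₀⟩ := hc₂.1 b
    have hk : kept T w v₀ := by
      by_contra hk
      rw [(none_iff_not_kept hT hw hc₂ ht₂ hcan₂ v₀).2 hk] at hv₀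
      exact Option.some_ne_none _ hv₀.symm
    have h2 : φ₁ v₀ ≠ none := fun h =>
      (none_iff_not_kept hT hw hc₁ ht₁ hcan₁ v₀).1 h hk
    obtain ⟨a, ha⟩ := Option.ne_none_iff_exists'.1 h2
    exact ⟨a, fun v hv => (key21 v v₀ (hv.trans hv₀.symm)).trans ha⟩
  choose ψ hψ using hψ
  choose ψ' hψ' using hψ'
  have hli : ∀ a : V₁, ψ' (ψ a) = a := by
    intro a
    obtain ⟨v₀, hv₀⟩ := hc₁.1 a
    have h1 : φ₂ v₀ = some (ψ a) := hψ a v₀ hv₀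
    have h2 : φ₁ v₀ = some (ψ' (ψ a)) := hψ' (ψ a) v₀ h1
    rw [hv₀] at h2
    exact (Option.some_inj.1 h2).symm
  have hri : ∀ b : V₂, ψ (ψ' b) = b := by
    intro b
    obtain ⟨v₀, hv₀⟩ := hc₂.1 b
    have h1 : φ₁ v₀ = some (ψ' b) := hψ' b v₀ hv₀
    have h2 : φ₂ v₀ = some (ψ (ψ' b)) := hψ (ψ' b) v₀ h1
    rw [hv₀] at h2
    exact (Option.some_inj.1 h2).symm
  have hconv : ∀ (a : V₁) v, φ₂ v = some (ψ a) → φ₁ v = some a := by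
    intro a v hv
    have := hψ' (ψ a) v hv
    rwa [hli a] at this
  refine ⟨⟨ψ, ψ', hli, hri⟩, ?_, ?_⟩
  · intro x y
    simp only [Equiv.coe_fn_mk]
    by_cases hxy : x = y
    · subst hxy
      exact iff_of_false (T₁.loopless.irrefl x) (T₂.loopless.irrefl (ψ x))
    · have hxy2 : ψ x ≠ ψ y := fun h => hxy (by rw [← hli x, h, hli y])
      rw [hc₁.2.2.2.2.2.2 x y hxy, hc₂.2.2.2.2.2.2 _ _ hxy2]
      constructor
      · rintro ⟨u, v, huv, hu, hv⟩
        exact ⟨u, v, huv, hψ x u hu, hψ y v hv⟩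
      · rintro ⟨u, v, huv, hu, hv⟩
        exact ⟨u, v, huv, hconv x u hu, hconv y v hv⟩
  · intro x
    simp only [Equiv.coe_fn_mk]
    rw [hc₂.2.2.2.2.2.1, hc₁.2.2.2.2.2.1]
    refine Finset.sum_congr rfl fun v _ => ?_
    by_cases h : φ₁ v = some x
    · rw [if_pos h, if_pos (hψ x v h)]
    · rw [if_neg h, if_neg (fun hh => h (hconv x v hh))]

end Two

section FinT
variable (T w) [Fintype V]

noncomputable def eps : V0 T w ≃ Fin (Fintype.card (V0 T w)) := Fintype.equivFin _

noncomputable def Tf : SimpleGraph (Fin (Fintype.card (V0 T w))) :=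
  SimpleGraph.comap (⇑(eps T w).symm) (T0 T w)

noncomputable def wf (i : Fin (Fintype.card (V0 T w))) : ℕ := w0 T w ((eps T w).symm i)

noncomputable def phif (v : V) : Option (Fin (Fintype.card (V0 T w))) :=
  (phi0 T w v).map (eps T w)

variable {T w}

lemma phif_some_iff {v : V} {i : Fin (Fintype.card (V0 T w))} :
    phif T w v = some i ↔ phi0 T w v = some ((eps T w).symm i) := by
  rw [phif, Option.map_eq_some_iff]
  constructor
  · rintro ⟨c, hc, rfl⟩
    simpa using hc
  · intro h
    exact ⟨_, h, by simp⟩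

lemma phif_none_iff {v : V} : phif T w v = none ↔ phi0 T w v = none := by
  rw [phif, Option.map_eq_none_iff]

lemma phif_inj_eq {v u : V} : phif T w v = phif T w u ↔ phi0 T w v = phi0 T w u := by
  constructor
  · exact fun h => Option.map_injective (eps T w).injective h
  · intro h; rw [phif, phif, h]

lemma contraction_f : Contraction T w (Tf T w) (wf T w) (phif T w) := by
  obtain ⟨hsurj, hnone, hsame, hzr, hzr', hwsum, hadj⟩ := contraction0 T w
  refine ⟨?_, ?_, ?_, ?_, ?_, ?_, ?_⟩
  · intro i
    obtain ⟨v, hv⟩ := hsurj ((eps T w).symm i)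
    exact ⟨v, phif_some_iff.2 hv⟩
  · intro v hv
    exact hnone v (phif_none_iff.1 hv)
  · intro v u hne heq hnn
    exact hsame v u hne (phif_inj_eq.1 heq) (fun h => hnn (phif_none_iff.2 h))
  · intro v u h
    rw [phif, phif, hzr v u h]
  · intro v u hne heq hnn
    exact hzr' v u hne (phif_inj_eq.1 heq) (fun h => hnn (phif_none_iff.2 h))
  · intro i
    rw [wf, hwsum]
    refine Finset.sum_congr rfl fun v _ => ?_
    by_cases h : phi0 T w v = some ((eps T w).symm i)
    · rw [if_pos h, if_pos (phif_some_iff.2 h)]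
    · rw [if_neg h, if_neg (fun hh => h (phif_some_iff.1 hh))]
  · intro i j hij
    have hij' : (eps T w).symm i ≠ (eps T w).symm j :=
      fun h => hij ((eps T w).symm.injective h)
    rw [Tf, comap_adj, hadj _ _ hij']
    constructor
    · rintro ⟨x, y, hxy, hx, hy⟩
      exact ⟨x, y, hxy, phif_some_iff.2 hx, phif_some_iff.2 hy⟩
    · rintro ⟨x, y, hxy, hx, hy⟩
      exact ⟨x, y, hxy, phif_some_iff.1 hx, phif_some_iff.1 hy⟩

lemma tree_f (hT : T.IsTree) (hw : 0 < ∑ v : V, w v) : (Tf T w).IsTree := by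
  constructor
  · have hhom : ∀ a b : V0 T w, (T0 T w).Adj a b → (Tf T w).Adj (eps T w a) (eps T w b) := by
      intro a b h
      rw [Tf, comap_adj]
      simpa using h
    exact (connected0 hT hw).map ⟨⇑(eps T w), fun {a b} h => hhom a b h⟩
      (eps T w).surjective
  · intro i c hc
    have hhom : ∀ a b, (Tf T w).Adj a b → (T0 T w).Adj ((eps T w).symm a) ((eps T w).symm b) :=
      fun a b h => by rwa [Tf, comap_adj] at h
    have := hc.map (f := ⟨⇑(eps T w).symm, fun {a b} h => hhom a b h⟩)
      (eps T w).symm.injective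
    exact acyclic0 hT _ this

lemma neighborSet_f (i : Fin (Fintype.card (V0 T w))) :
    (Tf T w).neighborSet i = ⇑(eps T w) '' ((T0 T w).neighborSet ((eps T w).symm i)) := by
  ext j
  simp only [mem_neighborSet, Set.mem_image, Tf, comap_adj]
  constructor
  · intro h
    exact ⟨(eps T w).symm j, h, by simp⟩
  · rintro ⟨k, hk, rfl⟩
    simpa using hk

lemma canonical_f (hT : T.IsTree) : Canonical (Tf T w) (wf T w) := by
  obtain ⟨h1, h2⟩ := canonical0 (w := w) hT
  constructor
  · intro i j hij
    exact h1 _ _ (by rwa [Tf, comap_adj] at hij)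
  · intro i hleaf
    rw [IsLeaf, neighborSet_f, Set.ncard_image_of_injective _ (eps T w).injective] at hleaf
    exact h2 _ hleaf

lemma sum_f : ∑ᶠ i, wf T w i = ∑ v, w v := by
  rw [finsum_eq_sum_of_fintype]
  have : ∑ i, wf T w i = ∑ c, w0 T w c := Equiv.sum_comp (eps T w).symm (w0 T w)
  rw [this, ← finsum_eq_sum_of_fintype, sum0]

end FinT
end S19

/-- Every weighted tree of positive total weight can be transformed into a canonical
weighted tree of the same total weight by contracting maximal zero-weight subtrees and
deleting zero-weight leaves, and the resulting canonical weighted tree is unique up to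
isomorphism. -/
theorem stmt_19 {V : Type*} [Fintype V] (T : SimpleGraph V) (w : V → ℕ)
    (hT : T.IsTree) (hw : 0 < ∑ v, w v) :
    ∃ (V' : Type) (_ : Fintype V') (T' : SimpleGraph V') (w' : V' → ℕ) (φ : V → Option V'),
      Contraction T w T' w' φ ∧ T'.IsTree ∧ Canonical T' w' ∧
      (∑ᶠ v', w' v') = ∑ v, w v ∧
      ∀ (V'' : Type) (T'' : SimpleGraph V'') (w'' : V'' → ℕ) (φ' : V → Option V''),
        Contraction T w T'' w'' φ' → T''.IsTree → Canonical T'' w'' →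
        ∃ e : V' ≃ V'', (∀ x y, T'.Adj x y ↔ T''.Adj (e x) (e y)) ∧
          ∀ x, w'' (e x) = w' x := by
  refine ⟨Fin (Fintype.card (S19.V0 T w)), inferInstance, S19.Tf T w, S19.wf T w,
    S19.phif T w, S19.contraction_f, S19.tree_f hT hw, S19.canonical_f hT, S19.sum_f, ?_⟩
  intro V'' T'' w'' φ' hc'' ht'' hcan''
  exact S19.equiv_of_two hT hw S19.contraction_f (S19.tree_f hT hw) (S19.canonical_f hT)
    hc'' ht'' hcan''
end
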